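/- arXiv:1810.07793 — 6 statements merged into one kernel-verified Lean document; each statement's English description precedes it below -/
import Mathlib

section
/- Let (X,d) be a compact metric space with diam(X) < D, let ε > 0, and let α, β be fully supported Borel probability measures on X each satisfying the Λ-doubling condition for some Λ > 0. Then for every x ∈ X, d_{W,1}(m_α^{(ε)}(x), m_β^{(ε)}(x)) ≤ (1+2ε) · Φ_{Λ,D,ε}(√(d_{W,1}(α,β))); i.e., the supremum over x ∈ X of the left-hand side is bounded by the right-hand side. -/
open MeasureTheory Metric Set Filter

/-- The ℓ¹-Wasserstein distance: infimum over couplings of the expected distance. -/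
noncomputable def wassersteinDist {X : Type*} [MeasurableSpace X] [PseudoMetricSpace X]
    (α β : Measure X) : ℝ :=
  sInf ((fun μ : Measure (X × X) => ∫ p, dist p.1 p.2 ∂μ) ''
    {μ : Measure (X × X) | μ.map Prod.fst = α ∧ μ.map Prod.snd = β})

/-- The (one-sided) Prokhorov distance between Borel probability measures. -/
noncomputable def prokhorovDist {X : Type*} [MeasurableSpace X] [PseudoMetricSpace X]
    (α β : Measure X) : ℝ :=
  sInf {δ : ℝ | 0 < δ ∧ ∀ A : Set X, α A ≤ β (thickening δ A) + ENNReal.ofReal δ}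

/-- ε-local truncation of α at x: restrict to the closed ε-ball and renormalize. -/
noncomputable def localTrunc {X : Type*} [MeasurableSpace X] [PseudoMetricSpace X]
    (α : Measure X) (ε : ℝ) (x : X) : Measure X :=
  (α (closedBall x ε))⁻¹ • α.restrict (closedBall x ε)

/-- The support of a measure: points all of whose neighborhoods have positive measure. -/
def msupport {X : Type*} [TopologicalSpace X] [MeasurableSpace X] (μ : Measure X) : Set X :=
  {x : X | ∀ U ∈ nhds x, 0 < μ U}

/-- The Λ-doubling condition for a Borel measure: for points in the support,
`α (closedBall x r₁) / α (closedBall x r₂) ≤ (r₁/r₂)^Λ` whenever `r₁ ≥ r₂ > 0`. -/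
def DoublingCond {X : Type*} [MeasurableSpace X] [PseudoMetricSpace X]
    (α : Measure X) (Λ : ℝ) : Prop :=
  ∀ x ∈ msupport α, ∀ r₁ r₂ : ℝ, r₂ ≤ r₁ → 0 < r₂ →
    α (closedBall x r₁) / α (closedBall x r₂) ≤ ENNReal.ofReal ((r₁ / r₂) ^ Λ)

/-- `ψ_{Λ,D}(r) = min(1, (r/D)^Λ)`. -/
noncomputable def psiLD (Λ D r : ℝ) : ℝ := min 1 ((r / D) ^ Λ)

/-- `Φ_{Λ,D,ε}(η) = η/ψ_{Λ,D}(ε) + ((1+η/ε)^Λ − 1)`. -/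
noncomputable def PhiLDE (Λ D ε η : ℝ) : ℝ := η / psiLD Λ D ε + ((1 + η / ε) ^ Λ - 1)


section AuxStability
set_option linter.unusedSectionVars false
set_option maxHeartbeats 1000000
variable {X : Type*} [MetricSpace X] [CompactSpace X] [MeasurableSpace X] [BorelSpace X]

lemma ball_pos (μ : Measure X) (hfull : msupport μ = univ) (x : X) {ε : ℝ} (hε : 0 < ε) :
    μ (closedBall x ε) ≠ 0 := by
  have hx : x ∈ msupport μ := by rw [hfull]; trivial
  have h := hx (ball x ε) (ball_mem_nhds x hε)
  exact (h.trans_le (measure_mono ball_subset_closedBall)).ne'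

lemma ball_ge_psi (Λ D ε : ℝ) (hΛ : 0 < Λ) (hε : 0 < ε) (hD : Metric.diam (univ : Set X) < D)
    (μ : Measure X) [IsProbabilityMeasure μ] (hfull : msupport μ = univ)
    (hdb : DoublingCond μ Λ) (x : X) :
    ENNReal.ofReal (psiLD Λ D ε) ≤ μ (closedBall x ε) := by
  have hψ1 : psiLD Λ D ε ≤ 1 := min_le_left _ _
  have hDpos : 0 < D := lt_of_le_of_lt diam_nonneg hD
  rcases le_or_gt D ε with h | h
  · have hsub : (univ : Set X) ⊆ closedBall x ε := fun y _ => by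
      have hb := dist_le_diam_of_mem isCompact_univ.isBounded (mem_univ y) (mem_univ x)
      exact mem_closedBall.mpr (le_trans hb (by linarith))
    have h1 : μ (closedBall x ε) = 1 := le_antisymm (prob_le_one (μ := μ)) (by simpa using measure_mono (μ := μ) hsub)
    rw [h1]
    exact ENNReal.ofReal_le_one.mpr hψ1
  · have hx : x ∈ msupport μ := by rw [hfull]; trivial
    have hdub := hdb x hx D ε h.le hε
    have hD1 : μ (closedBall x D) = 1 := by
      have hsub : (univ : Set X) ⊆ closedBall x D := fun y _ => by
        have hb := dist_le_diam_of_mem isCompact_univ.isBounded (mem_univ y) (mem_univ x)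
        exact mem_closedBall.mpr (le_trans hb hD.le)
      exact le_antisymm (prob_le_one (μ := μ)) (by simpa using measure_mono (μ := μ) hsub)
    rw [hD1] at hdub
    have hRpos : 0 < (D / ε) ^ Λ := Real.rpow_pos_of_pos (by positivity) _
    set c : ENNReal := ENNReal.ofReal ((D / ε) ^ Λ) with hc
    have hc0 : c ≠ 0 := by simpa [hc] using (ENNReal.ofReal_pos.mpr hRpos).ne'
    have hctop : c ≠ ⊤ := ENNReal.ofReal_ne_top
    have hμ0 : μ (closedBall x ε) ≠ 0 := ball_pos μ hfull x hε
    have hμtop : μ (closedBall x ε) ≠ ⊤ := (measure_lt_top μ _).ne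
    have h1c : 1 ≤ c * μ (closedBall x ε) := by
      rw [ENNReal.div_le_iff hμ0 hμtop] at hdub
      exact hdub
    have hcinv : c⁻¹ ≤ μ (closedBall x ε) := by
      calc c⁻¹ = c⁻¹ * 1 := (mul_one _).symm
        _ ≤ c⁻¹ * (c * μ (closedBall x ε)) := mul_le_mul_right h1c _
        _ = μ (closedBall x ε) := by
            rw [← mul_assoc, ENNReal.inv_mul_cancel hc0 hctop, one_mul]
    have hcinv' : c⁻¹ = ENNReal.ofReal ((ε / D) ^ Λ) := by
      rw [hc, ← ENNReal.ofReal_inv_of_pos hRpos]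
      congr 1
      rw [← Real.inv_rpow (by positivity), inv_div]
    refine le_trans ?_ hcinv
    rw [hcinv']
    exact ENNReal.ofReal_le_ofReal (min_le_right _ _)


lemma integrable_dist_pair (μ : Measure (X × X)) [IsFiniteMeasure μ] :
    Integrable (fun p : X × X => dist p.1 p.2) μ := by
  have hc : Continuous fun p : X × X => dist p.1 p.2 := continuous_fst.dist continuous_snd
  have h2 := hc.continuousOn.integrableOn_compact
    (isCompact_univ : IsCompact (univ : Set (X × X))) (μ := μ)
  simpa [IntegrableOn] using h2

lemma wcouplings_bddBelow (α β : Measure X) :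
    BddBelow ((fun μ : Measure (X × X) => ∫ p, dist p.1 p.2 ∂μ) ''
      {μ : Measure (X × X) | μ.map Prod.fst = α ∧ μ.map Prod.snd = β}) := by
  refine ⟨0, fun y hy => ?_⟩
  obtain ⟨μ, -, rfl⟩ := hy
  exact integral_nonneg fun p => dist_nonneg

lemma wassersteinDist_le_coupling {α β : Measure X} {μ : Measure (X × X)}
    (h1 : μ.map Prod.fst = α) (h2 : μ.map Prod.snd = β) :
    wassersteinDist α β ≤ ∫ p, dist p.1 p.2 ∂μ :=
  csInf_le (wcouplings_bddBelow α β) ⟨μ, ⟨h1, h2⟩, rfl⟩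

lemma key_coupling (Λ D ε δ : ℝ) (hε : 0 < ε) (hδ : 0 < δ)
    (α β : Measure X) [IsProbabilityMeasure α] [IsProbabilityMeasure β] (x : X)
    (ha0 : α (closedBall x ε) ≠ 0) (hb0 : β (closedBall x ε) ≠ 0)
    (hba : β (closedBall x ε) ≤ α (closedBall x ε))
    (hψa : ENNReal.ofReal (psiLD Λ D ε) ≤ α (closedBall x ε))
    (hψpos : 0 < psiLD Λ D ε)
    (hβd : β (closedBall x (ε + δ)) ≤ ENNReal.ofReal ((1 + δ / ε) ^ Λ) * β (closedBall x ε))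
    (hR : 1 ≤ (1 + δ / ε) ^ Λ)
    (π : Measure (X × X)) [IsProbabilityMeasure π]
    (hπ1 : π.map Prod.fst = α) (hπ2 : π.map Prod.snd = β)
    (hπE : π {p : X × X | δ < dist p.1 p.2} ≤ ENNReal.ofReal δ) :
    wassersteinDist (localTrunc α ε x) (localTrunc β ε x) ≤
      (1 + 2 * ε) * (δ / psiLD Λ D ε + ((1 + δ / ε) ^ Λ - 1)) := by
  set B : Set X := closedBall x ε with hB
  set B' : Set X := closedBall x (ε + δ) with hB'
  have hBm : MeasurableSet B := measurableSet_closedBall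
  have hB'm : MeasurableSet B' := measurableSet_closedBall
  set a : ENNReal := α B with ha
  set b : ENNReal := β B with hbdef
  have hatop : a ≠ ⊤ := (measure_lt_top α B).ne
  have hbtop : b ≠ ⊤ := (measure_lt_top β B).ne
  have hainv_top : a⁻¹ ≠ ⊤ := ENNReal.inv_ne_top.mpr ha0
  set S : Set (X × X) := (B ×ˢ B) ∩ {p : X × X | dist p.1 p.2 ≤ δ} with hS
  have hSm : MeasurableSet S :=
    (hBm.prod hBm).inter
      (measurableSet_le (measurable_fst.dist measurable_snd) measurable_const)
  set σ : Measure (X × X) := π.restrict S with hσ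
  set m : ENNReal := π S with hm
  have hσuniv : σ univ = m := by rw [hσ, Measure.restrict_apply_univ]
  set σ₁ : Measure X := σ.map Prod.fst with hσ₁
  set σ₂ : Measure X := σ.map Prod.snd with hσ₂
  have hσ₁le : σ₁ ≤ α.restrict B := by
    calc σ₁ ≤ (π.restrict (Prod.fst ⁻¹' B)).map Prod.fst :=
          Measure.map_mono (Measure.restrict_mono (fun p hp => hp.1.1) le_rfl)
            measurable_fst
      _ = α.restrict B := by rw [← Measure.restrict_map measurable_fst hBm, hπ1]

  have hσ₂le : σ₂ ≤ β.restrict B := by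
    calc σ₂ ≤ (π.restrict (Prod.snd ⁻¹' B)).map Prod.snd :=
          Measure.map_mono (Measure.restrict_mono (fun p hp => hp.1.2) le_rfl)
            measurable_snd
      _ = β.restrict B := by rw [← Measure.restrict_map measurable_snd hBm, hπ2]
  have hmαdef : localTrunc α ε x = a⁻¹ • α.restrict B := rfl
  have hmβdef : localTrunc β ε x = b⁻¹ • β.restrict B := rfl
  have hmαuniv : (a⁻¹ • α.restrict B) univ = 1 := by
    rw [Measure.smul_apply, Measure.restrict_apply_univ, smul_eq_mul, ← ha,
      ENNReal.inv_mul_cancel ha0 hatop]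
  have hmβuniv : (b⁻¹ • β.restrict B) univ = 1 := by
    rw [Measure.smul_apply, Measure.restrict_apply_univ, smul_eq_mul, ← hbdef,
      ENNReal.inv_mul_cancel hb0 hbtop]
  have hν₁le : a⁻¹ • σ₁ ≤ a⁻¹ • α.restrict B := by
    refine Measure.le_iff.mpr fun s hs => ?_
    simp only [Measure.smul_apply, smul_eq_mul]
    exact mul_le_mul_right (Measure.le_iff.mp hσ₁le s hs) _
  have hν₂le : a⁻¹ • σ₂ ≤ b⁻¹ • β.restrict B := by
    refine Measure.le_iff.mpr fun s hs => ?_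
    simp only [Measure.smul_apply, smul_eq_mul]
    exact mul_le_mul (ENNReal.inv_le_inv.mpr hba) (Measure.le_iff.mp hσ₂le s hs)
      zero_le zero_le
  haveI iPα : IsProbabilityMeasure (a⁻¹ • α.restrict B) := ⟨hmαuniv⟩
  haveI iPβ : IsProbabilityMeasure (b⁻¹ • β.restrict B) := ⟨hmβuniv⟩
  haveI : IsFiniteMeasure (a⁻¹ • σ₁) := isFiniteMeasure_of_le _ hν₁le
  haveI : IsFiniteMeasure (a⁻¹ • σ₂) := isFiniteMeasure_of_le _ hν₂le
  set ρ₁ : Measure X := (a⁻¹ • α.restrict B) - (a⁻¹ • σ₁) with hρ₁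
  set ρ₂ : Measure X := (b⁻¹ • β.restrict B) - (a⁻¹ • σ₂) with hρ₂
  haveI : IsFiniteMeasure ρ₁ := isFiniteMeasure_of_le _ Measure.sub_le
  haveI : IsFiniteMeasure ρ₂ := isFiniteMeasure_of_le _ Measure.sub_le
  set r : ENNReal := 1 - a⁻¹ * m with hr
  have hrle1 : r ≤ 1 := tsub_le_self
  have hrtop : r ≠ ⊤ := (hrle1.trans_lt ENNReal.one_lt_top).ne
  have hσ₁univ : σ₁ univ = m := by
    rw [hσ₁, Measure.map_apply measurable_fst MeasurableSet.univ, preimage_univ, hσuniv]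
  have hσ₂univ : σ₂ univ = m := by
    rw [hσ₂, Measure.map_apply measurable_snd MeasurableSet.univ, preimage_univ, hσuniv]
  have hρ₁univ : ρ₁ univ = r := by
    rw [hρ₁, Measure.sub_apply MeasurableSet.univ hν₁le, hmαuniv, Measure.smul_apply,
      hσ₁univ, smul_eq_mul]
  have hρ₂univ : ρ₂ univ = r := by
    rw [hρ₂, Measure.sub_apply MeasurableSet.univ hν₂le, hmβuniv, Measure.smul_apply,
      hσ₂univ, smul_eq_mul]
  set γ : Measure (X × X) := (a⁻¹ • σ) + r⁻¹ • (ρ₁.prod ρ₂) with hγ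
  have hrrsmul : ∀ ρ : Measure X, ρ univ = r → (r⁻¹ * r) • ρ = ρ := by
    intro ρ hρu
    rcases eq_or_ne r 0 with h0 | h0
    · have hz : ρ = 0 := Measure.measure_univ_eq_zero.mp (by rw [hρu, h0])
      simp [hz]
    · rw [ENNReal.inv_mul_cancel h0 hrtop, one_smul]
  have hrrle1 : r⁻¹ * r ≤ 1 := by
    rcases eq_or_ne r 0 with h0 | h0
    · simp [h0]
    · rw [ENNReal.inv_mul_cancel h0 hrtop]
  have hmapfst : γ.map Prod.fst = localTrunc α ε x := by
    rw [hγ, Measure.map_add _ _ measurable_fst, Measure.map_smul, Measure.map_smul,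
      Measure.map_fst_prod, hρ₂univ, ← hσ₁, smul_smul, hrrsmul ρ₁ hρ₁univ, hmαdef,
      hρ₁, add_comm, Measure.sub_add_cancel_of_le hν₁le]
  have hmapsnd : γ.map Prod.snd = localTrunc β ε x := by
    rw [hγ, Measure.map_add _ _ measurable_snd, Measure.map_smul, Measure.map_smul,
      Measure.map_snd_prod, hρ₁univ, ← hσ₂, smul_smul, hrrsmul ρ₂ hρ₂univ, hmβdef,
      hρ₂, add_comm, Measure.sub_add_cancel_of_le hν₂le]
  haveI hfin1 : IsFiniteMeasure (a⁻¹ • σ) := by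
    constructor
    rw [Measure.smul_apply, smul_eq_mul]
    exact ENNReal.mul_lt_top hainv_top.lt_top (measure_lt_top _ _)
  haveI hfin2 : IsFiniteMeasure (r⁻¹ • ρ₁.prod ρ₂) := by
    constructor
    rw [Measure.smul_apply, smul_eq_mul, ← univ_prod_univ, Measure.prod_prod,
      hρ₁univ, hρ₂univ, ← mul_assoc]
    calc r⁻¹ * r * r ≤ 1 * r := mul_le_mul_left hrrle1 r
      _ = r := one_mul r
      _ < ⊤ := hrtop.lt_top
  have hintσ : ∫ p, dist p.1 p.2 ∂σ ≤ δ * m.toReal := by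
    have hb : ∀ᵐ p ∂σ, ‖dist p.1 p.2‖ ≤ δ := by
      rw [hσ, ae_restrict_iff' hSm]
      exact ae_of_all _ fun p hp => by
        rw [Real.norm_of_nonneg dist_nonneg]; exact hp.2
    have h2 := norm_integral_le_of_norm_le_const (f := fun p : X × X => dist p.1 p.2) hb
    rw [measureReal_def, hσuniv] at h2
    exact (le_abs_self _).trans (by rwa [Real.norm_eq_abs] at h2)
  have hρ₁B : ρ₁ Bᶜ = 0 := by
    have hle := Measure.le_iff.mp (Measure.sub_le (μ := a⁻¹ • α.restrict B)
      (ν := a⁻¹ • σ₁)) Bᶜ hBm.compl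
    have hz : (a⁻¹ • α.restrict B) Bᶜ = 0 := by
      rw [Measure.smul_apply, Measure.restrict_apply hBm.compl, compl_inter_self,
        measure_empty, smul_eq_mul, mul_zero]
    rw [← hρ₁] at hle
    exact le_antisymm (hz ▸ hle) zero_le
  have hρ₂B : ρ₂ Bᶜ = 0 := by
    have hle := Measure.le_iff.mp (Measure.sub_le (μ := b⁻¹ • β.restrict B)
      (ν := a⁻¹ • σ₂)) Bᶜ hBm.compl
    have hz : (b⁻¹ • β.restrict B) Bᶜ = 0 := by
      rw [Measure.smul_apply, Measure.restrict_apply hBm.compl, compl_inter_self,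
        measure_empty, smul_eq_mul, mul_zero]
    rw [← hρ₂] at hle
    exact le_antisymm (hz ▸ hle) zero_le
  have hprodB : (ρ₁.prod ρ₂) ((B ×ˢ B)ᶜ) = 0 := by
    have hsub2 : (B ×ˢ B)ᶜ ⊆ (Bᶜ ×ˢ univ) ∪ (univ ×ˢ Bᶜ) := by
      intro p hp
      rw [mem_compl_iff, mem_prod] at hp
      by_cases h1 : p.1 ∈ B
      · exact Or.inr ⟨trivial, fun h2 => hp ⟨h1, h2⟩⟩
      · exact Or.inl ⟨h1, trivial⟩
    refine le_antisymm (le_trans (measure_mono hsub2) ?_) zero_le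
    refine le_trans (measure_union_le _ _) ?_
    rw [Measure.prod_prod, Measure.prod_prod, hρ₁B, hρ₂B]
    simp
  have hintp : ∫ p, dist p.1 p.2 ∂(ρ₁.prod ρ₂) ≤ 2 * ε * (r * r).toReal := by
    have hae : ∀ᵐ p ∂(ρ₁.prod ρ₂), p ∈ B ×ˢ B := by
      rw [ae_iff]
      exact hprodB
    have hb : ∀ᵐ p ∂(ρ₁.prod ρ₂), ‖dist p.1 p.2‖ ≤ 2 * ε := by
      filter_upwards [hae] with p hp
      rw [Real.norm_of_nonneg dist_nonneg]
      have h1 : dist p.1 x ≤ ε := mem_closedBall.mp hp.1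
      have h2 : dist p.2 x ≤ ε := mem_closedBall.mp hp.2
      calc dist p.1 p.2 ≤ dist p.1 x + dist p.2 x := dist_triangle_right _ _ _
        _ ≤ 2 * ε := by linarith
    have h2 := norm_integral_le_of_norm_le_const (f := fun p : X × X => dist p.1 p.2) hb
    rw [measureReal_def, ← univ_prod_univ, Measure.prod_prod, hρ₁univ, hρ₂univ] at h2
    exact (le_abs_self _).trans (by rwa [Real.norm_eq_abs] at h2)
  have hcost : ∫ p, dist p.1 p.2 ∂γ ≤ δ * (a⁻¹ * m).toReal + 2 * ε * r.toReal := by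
    rw [hγ, integral_add_measure (integrable_dist_pair _) (integrable_dist_pair _),
      integral_smul_measure, integral_smul_measure]
    have h1 : (a⁻¹).toReal • ∫ p, dist p.1 p.2 ∂σ ≤ δ * (a⁻¹ * m).toReal := by
      rw [smul_eq_mul, ENNReal.toReal_mul]
      calc (a⁻¹).toReal * ∫ p, dist p.1 p.2 ∂σ
          ≤ (a⁻¹).toReal * (δ * m.toReal) :=
            mul_le_mul_of_nonneg_left hintσ ENNReal.toReal_nonneg
        _ = δ * ((a⁻¹).toReal * m.toReal) := by ring
    have h2 : (r⁻¹).toReal • ∫ p, dist p.1 p.2 ∂(ρ₁.prod ρ₂) ≤ 2 * ε * r.toReal := by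
      rw [smul_eq_mul]
      calc (r⁻¹).toReal * ∫ p, dist p.1 p.2 ∂(ρ₁.prod ρ₂)
          ≤ (r⁻¹).toReal * (2 * ε * (r * r).toReal) :=
            mul_le_mul_of_nonneg_left hintp ENNReal.toReal_nonneg
        _ = 2 * ε * ((r⁻¹).toReal * (r * r).toReal) := by ring
        _ = 2 * ε * (r⁻¹ * (r * r)).toReal := by
            simp [ENNReal.toReal_mul]
        _ ≤ 2 * ε * r.toReal := by
            refine mul_le_mul_of_nonneg_left ?_ (by linarith)
            refine ENNReal.toReal_mono hrtop ?_
            calc r⁻¹ * (r * r) = (r⁻¹ * r) * r := (mul_assoc _ _ _).symm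
              _ ≤ 1 * r := mul_le_mul_left hrrle1 r
              _ = r := one_mul r
    exact add_le_add h1 h2
  have hπ1B : π (Prod.fst ⁻¹' B) = a := by
    rw [← Measure.map_apply measurable_fst hBm, hπ1]
  have hsub : Prod.fst ⁻¹' B ⊆
      (S ∪ {p : X × X | δ < dist p.1 p.2}) ∪ (Prod.snd ⁻¹' (B' \ B)) := by
    intro p hp
    by_cases hd : dist p.1 p.2 ≤ δ
    · by_cases h2 : p.2 ∈ B
      · exact Or.inl (Or.inl ⟨⟨hp, h2⟩, hd⟩)
      · refine Or.inr ⟨?_, h2⟩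
        have h3 : dist p.2 x ≤ dist p.2 p.1 + dist p.1 x := dist_triangle _ _ _
        rw [dist_comm p.2 p.1] at h3
        have h4 : dist p.1 x ≤ ε := mem_closedBall.mp hp
        exact mem_closedBall.mpr (by linarith)
    · exact Or.inl (Or.inr (lt_of_not_ge hd))
  have hmass : a ≤ m + ENNReal.ofReal δ + (β B' - b) := by
    calc a = π (Prod.fst ⁻¹' B) := hπ1B.symm
      _ ≤ π ((S ∪ {p : X × X | δ < dist p.1 p.2}) ∪ (Prod.snd ⁻¹' (B' \ B))) :=
          measure_mono hsub
      _ ≤ π (S ∪ {p : X × X | δ < dist p.1 p.2}) + π (Prod.snd ⁻¹' (B' \ B)) :=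
          measure_union_le _ _
      _ ≤ (π S + π {p : X × X | δ < dist p.1 p.2}) + π (Prod.snd ⁻¹' (B' \ B)) :=
          add_le_add_left (measure_union_le _ _) _
      _ ≤ (m + ENNReal.ofReal δ) + (β B' - b) := by
          refine add_le_add (add_le_add le_rfl hπE) ?_
          have he : π (Prod.snd ⁻¹' (B' \ B)) = β (B' \ B) := by
            rw [← Measure.map_apply measurable_snd (hB'm.diff hBm), hπ2]
          rw [he, measure_diff (closedBall_subset_closedBall (by linarith))
            hBm.nullMeasurableSet hbtop]
  have hrbound : r ≤ (ENNReal.ofReal δ + (β B' - b)) / a := by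
    rw [hr, tsub_le_iff_right]
    have hma : a⁻¹ * m = m / a := by rw [ENNReal.div_eq_inv_mul]
    rw [hma]
    calc (1:ENNReal) = a / a := (ENNReal.div_self ha0 hatop).symm
      _ ≤ (ENNReal.ofReal δ + (β B' - b) + m) / a := by
          refine ENNReal.div_le_div_right ?_ a
          calc a ≤ m + ENNReal.ofReal δ + (β B' - b) := hmass
            _ = ENNReal.ofReal δ + (β B' - b) + m := by ring
      _ = (ENNReal.ofReal δ + (β B' - b)) / a + m / a := by
          rw [ENNReal.div_add_div_same]
  set ψ := psiLD Λ D ε with hψdef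
  set T := (1 + δ / ε) ^ Λ - 1 with hT
  have hTnn : 0 ≤ T := by rw [hT]; linarith
  have hψle1 : ψ ≤ 1 := min_le_left _ _
  have hAψ : ψ ≤ a.toReal := by
    have h1 := ENNReal.toReal_mono hatop hψa
    rwa [ENNReal.toReal_ofReal hψpos.le] at h1
  have hApos : 0 < a.toReal := lt_of_lt_of_le hψpos hAψ
  have hmlea : m ≤ a := by rw [← hπ1B]; exact measure_mono (fun p hp => hp.1.1)
  have ht1 : (a⁻¹ * m).toReal ≤ 1 := by
    have h1 : a⁻¹ * m ≤ 1 := by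
      calc a⁻¹ * m ≤ a⁻¹ * a := mul_le_mul_right hmlea _
        _ = 1 := ENNReal.inv_mul_cancel ha0 hatop
    simpa using ENNReal.toReal_mono ENNReal.one_ne_top h1
  have hΔtop : (β B' - b) ≠ ⊤ := (tsub_le_self.trans_lt (measure_lt_top β B')).ne
  have hΔ : (β B' - b) ≤ ENNReal.ofReal T * a := by
    calc β B' - b ≤ ENNReal.ofReal ((1 + δ / ε) ^ Λ) * b - b := tsub_le_tsub_right hβd b
      _ = (ENNReal.ofReal ((1 + δ / ε) ^ Λ) - 1) * b := by
          rw [ENNReal.sub_mul (fun _ _ => hbtop), one_mul]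
      _ = ENNReal.ofReal T * b := by
          rw [hT, ENNReal.ofReal_sub _ zero_le_one, ENNReal.ofReal_one]
      _ ≤ ENNReal.ofReal T * a := mul_le_mul_right hba _
  have hΔreal : (β B' - b).toReal ≤ T * a.toReal := by
    have h1 := ENNReal.toReal_mono (ENNReal.mul_ne_top ENNReal.ofReal_ne_top hatop) hΔ
    rwa [ENNReal.toReal_mul, ENNReal.toReal_ofReal hTnn] at h1
  have hrreal : r.toReal ≤ δ / ψ + T := by
    have hdivtop : (ENNReal.ofReal δ + (β B' - b)) / a ≠ ⊤ := by
      simp [ENNReal.div_eq_top, ha0, ENNReal.add_eq_top, ENNReal.ofReal_ne_top, hΔtop]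
    have h1 := ENNReal.toReal_mono hdivtop hrbound
    rw [ENNReal.toReal_div] at h1
    calc r.toReal ≤ (ENNReal.ofReal δ + (β B' - b)).toReal / a.toReal := h1
      _ ≤ (δ + T * a.toReal) / a.toReal := by
          refine (div_le_div_iff_of_pos_right hApos).mpr ?_
          refine le_trans ENNReal.toReal_add_le ?_
          rw [ENNReal.toReal_ofReal hδ.le]
          linarith [hΔreal]
      _ = δ / a.toReal + T := by
          rw [add_div, mul_div_assoc, div_self hApos.ne', mul_one]
      _ ≤ δ / ψ + T := by
          have h3 : δ / a.toReal ≤ δ / ψ := by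
            apply div_le_div_of_nonneg_left hδ.le hψpos hAψ
          linarith
  have hle := wassersteinDist_le_coupling hmapfst hmapsnd
  refine le_trans hle (le_trans hcost ?_)
  have h1 : δ * (a⁻¹ * m).toReal ≤ δ := by nlinarith [ht1, ENNReal.toReal_nonneg (a := a⁻¹ * m)]
  have hδψ : δ ≤ δ / ψ := by
    rw [le_div_iff₀ hψpos]
    nlinarith
  have h2 : 2 * ε * r.toReal ≤ 2 * ε * (δ / ψ + T) :=
    mul_le_mul_of_nonneg_left hrreal (by linarith)
  nlinarith [h1, h2, hδψ, hTnn, hε]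


lemma wassersteinDist_symm (α β : Measure X) : wassersteinDist α β = wassersteinDist β α := by
  have key : ∀ γ δ : Measure X,
      ((fun μ : Measure (X × X) => ∫ p, dist p.1 p.2 ∂μ) ''
        {μ : Measure (X × X) | μ.map Prod.fst = γ ∧ μ.map Prod.snd = δ}) ⊆
      ((fun μ : Measure (X × X) => ∫ p, dist p.1 p.2 ∂μ) ''
        {μ : Measure (X × X) | μ.map Prod.fst = δ ∧ μ.map Prod.snd = γ}) := by
    rintro γ δ y ⟨μ, ⟨h1, h2⟩, rfl⟩
    refine ⟨μ.map Prod.swap, ⟨?_, ?_⟩, ?_⟩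
    · rw [Measure.map_map measurable_fst measurable_swap]
      simpa [Function.comp_def] using h2
    · rw [Measure.map_map measurable_snd measurable_swap]
      simpa [Function.comp_def] using h1
    · show ∫ p : X × X, dist p.1 p.2 ∂(μ.map Prod.swap) = ∫ p : X × X, dist p.1 p.2 ∂μ
      rw [integral_map measurable_swap.aemeasurable
        (continuous_fst.dist continuous_snd).aestronglyMeasurable]
      simp [dist_comm]
  unfold wassersteinDist
  exact congrArg sInf (subset_antisymm (key α β) (key β α))


end AuxStability

/-- **Stability of local truncations** (Theorem 3 of the paper).
For a compact metric space with diam < D and fully supported Λ-doubling Borel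
probability measures α, β, every localized pair is close in Wasserstein distance:
`d_{W,1}(m_α^{(ε)}(x), m_β^{(ε)}(x)) ≤ (1+2ε) Φ_{Λ,D,ε}(√(d_{W,1}(α,β)))` for all x. -/
theorem stability_of_local_truncations
    {X : Type*} [MetricSpace X] [CompactSpace X] [MeasurableSpace X] [BorelSpace X]
    (D Λ ε : ℝ) (hD : Metric.diam (Set.univ : Set X) < D) (hΛ : 0 < Λ) (hε : 0 < ε)
    (α β : Measure X) [IsProbabilityMeasure α] [IsProbabilityMeasure β]
    (hαfull : msupport α = Set.univ) (hβfull : msupport β = Set.univ)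
    (hα : DoublingCond α Λ) (hβ : DoublingCond β Λ) :
    ∀ x : X, wassersteinDist (localTrunc α ε x) (localTrunc β ε x) ≤
      (1 + 2 * ε) * PhiLDE Λ D ε (Real.sqrt (wassersteinDist α β)) := by
  intro x
  have hne : Set.Nonempty ((fun μ : Measure (X × X) => ∫ p, dist p.1 p.2 ∂μ) ''
      {μ : Measure (X × X) | μ.map Prod.fst = α ∧ μ.map Prod.snd = β}) := by
    refine ⟨_, ⟨α.prod β, ⟨?_, ?_⟩, rfl⟩⟩
    · rw [Measure.map_fst_prod]; simp
    · rw [Measure.map_snd_prod]; simp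
  have hwnonneg : 0 ≤ wassersteinDist α β := by
    apply Real.sInf_nonneg
    rintro y ⟨μ, -, rfl⟩
    exact integral_nonneg fun p => dist_nonneg
  set η := Real.sqrt (wassersteinDist α β) with hη
  have hηnn : 0 ≤ η := Real.sqrt_nonneg _
  have hDpos : 0 < D := lt_of_le_of_lt diam_nonneg hD
  have hψpos : 0 < psiLD Λ D ε := lt_min one_pos (Real.rpow_pos_of_pos (div_pos hε hDpos) _)
  have main : ∀ δ ∈ Ioi η, wassersteinDist (localTrunc α ε x) (localTrunc β ε x) ≤
      (1 + 2 * ε) * (δ / psiLD Λ D ε + ((1 + δ / ε) ^ Λ - 1)) := by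
    intro δ hδη
    rw [mem_Ioi] at hδη
    have hδ : 0 < δ := lt_of_le_of_lt hηnn hδη
    have hR : 1 ≤ (1 + δ / ε) ^ Λ := by
      have h0 := Real.rpow_le_rpow zero_le_one
        (show (1:ℝ) ≤ 1 + δ / ε by nlinarith [div_pos hδ hε]) hΛ.le
      rwa [Real.one_rpow] at h0
    have hwlt : wassersteinDist α β < δ * δ := by
      have h1 : wassersteinDist α β = η * η := (Real.mul_self_sqrt hwnonneg).symm
      rw [h1]
      exact mul_lt_mul'' hδη hδη hηnn hηnn
    obtain ⟨y, ⟨π, ⟨hπ1, hπ2⟩, rfl⟩, hyδ⟩ := exists_lt_of_csInf_lt hne hwlt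
    haveI : IsProbabilityMeasure π := by
      constructor
      have h1 : π.map Prod.fst univ = 1 := by rw [hπ1]; exact measure_univ
      rwa [Measure.map_apply measurable_fst MeasurableSet.univ, preimage_univ] at h1
    have hπE : π {p : X × X | δ < dist p.1 p.2} ≤ ENNReal.ofReal δ := by
      have hint : Integrable (fun p : X × X => dist p.1 p.2) π := integrable_dist_pair π
      have heq : ∫⁻ p, ENNReal.ofReal (dist p.1 p.2) ∂π
          = ENNReal.ofReal (∫ p, dist p.1 p.2 ∂π) :=
        (ofReal_integral_eq_lintegral_ofReal hint (ae_of_all _ fun p => dist_nonneg)).symm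
      have hmk : ENNReal.ofReal δ *
            π {p : X × X | ENNReal.ofReal δ ≤ ENNReal.ofReal (dist p.1 p.2)}
          ≤ ∫⁻ p, ENNReal.ofReal (dist p.1 p.2) ∂π :=
        mul_meas_ge_le_lintegral₀
          ((measurable_fst.dist measurable_snd).ennreal_ofReal.aemeasurable) _
      have hsub : {p : X × X | δ < dist p.1 p.2} ⊆
          {p : X × X | ENNReal.ofReal δ ≤ ENNReal.ofReal (dist p.1 p.2)} :=
        fun p hp => ENNReal.ofReal_le_ofReal (le_of_lt hp)
      have h2 : ENNReal.ofReal δ * π {p : X × X | δ < dist p.1 p.2}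
          < ENNReal.ofReal δ * ENNReal.ofReal δ := by
        calc ENNReal.ofReal δ * π {p : X × X | δ < dist p.1 p.2}
            ≤ ENNReal.ofReal δ *
              π {p : X × X | ENNReal.ofReal δ ≤ ENNReal.ofReal (dist p.1 p.2)} :=
              mul_le_mul_right (measure_mono hsub) _
          _ ≤ ∫⁻ p, ENNReal.ofReal (dist p.1 p.2) ∂π := hmk
          _ = ENNReal.ofReal (∫ p, dist p.1 p.2 ∂π) := heq
          _ < ENNReal.ofReal (δ * δ) :=
              (ENNReal.ofReal_lt_ofReal_iff (by positivity)).mpr hyδ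
          _ = ENNReal.ofReal δ * ENNReal.ofReal δ := ENNReal.ofReal_mul hδ.le
      have h3 := (ENNReal.mul_lt_mul_iff_right
        (by simpa using hδ : ENNReal.ofReal δ ≠ 0) ENNReal.ofReal_ne_top).mp h2
      exact h3.le
    have hmemsupp : ∀ μ : Measure X, msupport μ = univ → x ∈ msupport μ := by
      intro μ h; rw [h]; trivial
    have hRw : (ε + δ) / ε = 1 + δ / ε := by field_simp
    have hβd : β (closedBall x (ε + δ)) ≤
        ENNReal.ofReal ((1 + δ / ε) ^ Λ) * β (closedBall x ε) := by
      have h1 := hβ x (hmemsupp β hβfull) (ε + δ) ε (by linarith) hε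
      rw [hRw] at h1
      rwa [ENNReal.div_le_iff (ball_pos β hβfull x hε) (measure_lt_top β _).ne] at h1
    have hαd : α (closedBall x (ε + δ)) ≤
        ENNReal.ofReal ((1 + δ / ε) ^ Λ) * α (closedBall x ε) := by
      have h1 := hα x (hmemsupp α hαfull) (ε + δ) ε (by linarith) hε
      rw [hRw] at h1
      rwa [ENNReal.div_le_iff (ball_pos α hαfull x hε) (measure_lt_top α _).ne] at h1
    have hψa := ball_ge_psi Λ D ε hΛ hε hD α hαfull hα x
    have hψb := ball_ge_psi Λ D ε hΛ hε hD β hβfull hβ x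
    rcases le_total (β (closedBall x ε)) (α (closedBall x ε)) with hba | hab
    · exact key_coupling Λ D ε δ hε hδ α β x (ball_pos α hαfull x hε)
        (ball_pos β hβfull x hε) hba hψa hψpos hβd hR π hπ1 hπ2 hπE
    · rw [wassersteinDist_symm]
      set π' : Measure (X × X) := π.map Prod.swap with hπ'
      haveI : IsProbabilityMeasure π' :=
        Measure.isProbabilityMeasure_map measurable_swap.aemeasurable
      have hπ'1 : π'.map Prod.fst = β := by
        rw [hπ', Measure.map_map measurable_fst measurable_swap]; simpa [Function.comp_def] using hπ2
      have hπ'2 : π'.map Prod.snd = α := by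
        rw [hπ', Measure.map_map measurable_snd measurable_swap]; simpa [Function.comp_def] using hπ1
      have hπ'E : π' {p : X × X | δ < dist p.1 p.2} ≤ ENNReal.ofReal δ := by
        have hms : MeasurableSet {p : X × X | δ < dist p.1 p.2} :=
          measurableSet_lt measurable_const (measurable_fst.dist measurable_snd)
        rw [hπ', Measure.map_apply measurable_swap hms]
        have hseteq : Prod.swap ⁻¹' {p : X × X | δ < dist p.1 p.2}
            = {p : X × X | δ < dist p.1 p.2} := by
          ext p; simp [dist_comm]
        rw [hseteq]; exact hπE
      exact key_coupling Λ D ε δ hε hδ β α x (ball_pos β hβfull x hε)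
        (ball_pos α hαfull x hε) hab hψb hψpos hαd hR π' hπ'1 hπ'2 hπ'E
  have hcont : ContinuousAt
      (fun δ : ℝ => (1 + 2 * ε) * (δ / psiLD Λ D ε + ((1 + δ / ε) ^ Λ - 1))) η := by
    have h1 : ContinuousAt (fun δ : ℝ => (1 + δ / ε) ^ Λ) η :=
      (continuousAt_const.add (continuousAt_id.div_const ε)).rpow_const (Or.inr hΛ.le)
    exact continuousAt_const.mul
      (((continuousAt_id.div_const _)).add (h1.sub continuousAt_const))
  have htend : Tendsto
      (fun δ : ℝ => (1 + 2 * ε) * (δ / psiLD Λ D ε + ((1 + δ / ε) ^ Λ - 1)))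
      (nhdsWithin η (Ioi η))
      (nhds ((1 + 2 * ε) * (η / psiLD Λ D ε + ((1 + η / ε) ^ Λ - 1)))) :=
    hcont.tendsto.mono_left nhdsWithin_le_nhds
  have hfinal := ge_of_tendsto htend (eventually_nhdsWithin_of_forall main)
  simpa [PhiLDE] using hfinal
end

section
/- Let X be a compact subset of ℝⁿ with the Euclidean metric, with diam(X) < D, let ε > 0, and let α, β be fully supported Borel probability measures on X each satisfying the Λ-doubling condition for some Λ > 0. Then for every x ∈ X, ‖mean(m_α^{(ε)}(x)) − mean(m_β^{(ε)}(x))‖ ≤ (1+2ε) · Φ_{Λ,D,ε}(√(d_{W,1}(α,β))), where mean(μ) = ∫ y dμ(y) is the barycenter of μ. -/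
open MeasureTheory Metric Set Filter

lemma cont_integrable {Y E : Type*} [MeasurableSpace Y] [TopologicalSpace Y]
    [OpensMeasurableSpace Y] [SecondCountableTopology Y] [CompactSpace Y] [NormedAddCommGroup E]
    {f : Y → E} (hf : Continuous f) (μ : Measure Y) [IsFiniteMeasure μ] :
    Integrable f μ := by
  obtain ⟨C, hC⟩ := (isCompact_range hf).isBounded.exists_norm_le
  exact Integrable.mono' (integrable_const C) hf.aestronglyMeasurable
    (ae_of_all _ fun y => hC _ (mem_range_self y))

lemma mass_lb {Y : Type*} [MeasurableSpace Y] [PseudoMetricSpace Y]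
    (α : Measure Y) [IsProbabilityMeasure α] {Λ D ε : ℝ}
    (hΛ : 0 < Λ) (hε : 0 < ε) (hD : 0 < D)
    (hdiam : ∀ y z : Y, dist y z ≤ D)
    (hfull : msupport α = univ) (hα : DoublingCond α Λ) (x : Y) :
    ENNReal.ofReal (psiLD Λ D ε) ≤ α (closedBall x ε) := by
  have huniv : closedBall x D = univ :=
    eq_univ_of_forall fun y => mem_closedBall.2 (hdiam y x)
  rcases le_or_gt D ε with hDε | hεD
  · have : closedBall x ε = univ :=
      eq_univ_of_forall fun y => mem_closedBall.2 ((hdiam y x).trans hDε)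
    rw [this, measure_univ]
    exact (ENNReal.ofReal_le_one.2 (min_le_left _ _))
  · have hmem : x ∈ msupport α := hfull ▸ mem_univ x
    have h := hα x hmem D ε hεD.le hε
    rw [huniv, measure_univ] at h
    rw [ENNReal.div_eq_inv_mul, mul_one] at h
    have h2 : (ENNReal.ofReal ((D / ε) ^ Λ))⁻¹ ≤ α (closedBall x ε) := by
      calc (ENNReal.ofReal ((D / ε) ^ Λ))⁻¹ ≤ (α (closedBall x ε))⁻¹⁻¹ :=
            ENNReal.inv_le_inv.2 h
        _ = α (closedBall x ε) := inv_inv _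
    have hpos : (0:ℝ) < (D / ε) ^ Λ := Real.rpow_pos_of_pos (div_pos hD hε) _
    rw [← ENNReal.ofReal_inv_of_pos hpos] at h2
    refine le_trans (ENNReal.ofReal_le_ofReal ?_) h2
    have : ((D / ε) ^ Λ)⁻¹ = (ε / D) ^ Λ := by
      rw [← Real.inv_rpow (div_pos hD hε).le, inv_div]
    rw [this]
    exact min_le_right _ _

lemma psiLD_pos {Λ D ε : ℝ} (hΛ : 0 < Λ) (hε : 0 < ε) (hD : 0 < D) :
    0 < psiLD Λ D ε :=
  lt_min one_pos (Real.rpow_pos_of_pos (div_pos hε hD) _)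

lemma mass_lb_real {Y : Type*} [MeasurableSpace Y] [PseudoMetricSpace Y]
    (α : Measure Y) [IsProbabilityMeasure α] {Λ D ε : ℝ}
    (hΛ : 0 < Λ) (hε : 0 < ε) (hD : 0 < D)
    (hdiam : ∀ y z : Y, dist y z ≤ D)
    (hfull : msupport α = univ) (hα : DoublingCond α Λ) (x : Y) :
    psiLD Λ D ε ≤ (α (closedBall x ε)).toReal := by
  have h := mass_lb α hΛ hε hD hdiam hfull hα x
  have hne : α (closedBall x ε) ≠ ⊤ := measure_ne_top _ _
  calc psiLD Λ D ε = (ENNReal.ofReal (psiLD Λ D ε)).toReal :=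
        (ENNReal.toReal_ofReal (psiLD_pos hΛ hε hD).le).symm
    _ ≤ (α (closedBall x ε)).toReal := ENNReal.toReal_mono hne h

lemma localTrunc_prob {Y : Type*} [MeasurableSpace Y] [PseudoMetricSpace Y]
    (α : Measure Y) [IsFiniteMeasure α] {ε : ℝ} {x : Y}
    (h0 : α (closedBall x ε) ≠ 0) :
    IsProbabilityMeasure (localTrunc α ε x) := by
  constructor
  rw [localTrunc, Measure.smul_apply, Measure.restrict_apply MeasurableSet.univ,
    univ_inter, smul_eq_mul]
  exact ENNReal.inv_mul_cancel h0 (measure_ne_top _ _)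

lemma localTrunc_ae_mem {Y : Type*} [MeasurableSpace Y] [PseudoMetricSpace Y]
    [OpensMeasurableSpace Y]
    (α : Measure Y) [IsFiniteMeasure α] {ε : ℝ} {x : Y} :
    ∀ᵐ y ∂(localTrunc α ε x), y ∈ closedBall x ε := by
  rw [ae_iff]
  have : {y | ¬ y ∈ closedBall x ε} = (closedBall x ε)ᶜ := rfl
  rw [this, localTrunc, Measure.smul_apply,
    Measure.restrict_apply (measurableSet_closedBall.compl)]
  simp

lemma mean_dist_le {Y E : Type*} [MeasurableSpace Y] [MetricSpace Y]
    [OpensMeasurableSpace Y] [SecondCountableTopology Y] [CompactSpace Y]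
    [NormedAddCommGroup E] [NormedSpace ℝ E] [CompleteSpace E]
    (u : Y → E) (hu : Isometry u)
    (α : Measure Y) [IsProbabilityMeasure α] {ε : ℝ} {x : Y}
    (h0 : α (closedBall x ε) ≠ 0) :
    ‖(∫ y, u y ∂(localTrunc α ε x)) - u x‖ ≤ ε := by
  haveI := localTrunc_prob α h0
  have hint : Integrable u (localTrunc α ε x) := cont_integrable hu.continuous _
  have : (∫ y, u y ∂(localTrunc α ε x)) - u x
      = ∫ y, (u y - u x) ∂(localTrunc α ε x) := by
    rw [integral_sub hint (integrable_const _), integral_const]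
    simp
  rw [this]
  have hb : ∀ᵐ y ∂(localTrunc α ε x), ‖u y - u x‖ ≤ ε := by
    filter_upwards [localTrunc_ae_mem α] with y hy
    rw [← dist_eq_norm, hu.dist_eq]
    exact hy
  calc ‖∫ y, (u y - u x) ∂(localTrunc α ε x)‖ ≤ ε * ((localTrunc α ε x) univ).toReal :=
        norm_integral_le_of_norm_le_const hb
    _ = ε := by simp


section Master

variable {Y E : Type*} [MeasurableSpace Y] [MetricSpace Y] [BorelSpace Y]
  [SecondCountableTopology Y] [CompactSpace Y]
  [NormedAddCommGroup E] [NormedSpace ℝ E] [CompleteSpace E]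

lemma master (u : Y → E) (hu : Isometry u)
    (α β : Measure Y) [IsProbabilityMeasure α] [IsProbabilityMeasure β]
    (μ : Measure (Y × Y)) (hμ1 : μ.map Prod.fst = α) (hμ2 : μ.map Prod.snd = β)
    (x : Y) {ε η' φ : ℝ} (hε : 0 < ε) (hη' : 0 < η') (hφ : 0 ≤ φ)
    (hp0 : 0 < (α (closedBall x ε)).toReal)
    (hq0 : 0 < (β (closedBall x ε)).toReal)
    (hq : (β (closedBall x ε)).toReal ≤ (α (closedBall x ε)).toReal)
    (hann : (β (closedBall x (ε + η'))).toReal ≤ (β (closedBall x ε)).toReal * (1 + φ)) :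
    ‖(∫ y, u y ∂localTrunc α ε x) - ∫ y, u y ∂localTrunc β ε x‖ ≤
      ((∫ w, dist w.1 w.2 ∂μ) + 2 * ε * ((∫ w, dist w.1 w.2 ∂μ) / η')) /
        (α (closedBall x ε)).toReal + 2 * ε * φ := by
  haveI hμprob : IsProbabilityMeasure μ := by
    constructor
    have : μ.map Prod.fst univ = μ univ := by
      rw [Measure.map_apply measurable_fst MeasurableSet.univ, preimage_univ]
    rw [← this, hμ1, measure_univ]
  set B : Set Y := closedBall x ε with hBdef
  set B' : Set Y := closedBall x (ε + η') with hB'def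
  have hB : MeasurableSet B := measurableSet_closedBall
  have hB' : MeasurableSet B' := measurableSet_closedBall
  set p : ℝ := (α B).toReal with hpdef
  set q : ℝ := (β B).toReal with hqdef
  set W' : ℝ := ∫ w, dist w.1 w.2 ∂μ with hW'def
  set s : ℝ := (μ (B ×ˢ B)).toReal with hsdef
  -- marginal identities
  have hfstB : μ (B ×ˢ univ) = α B := by
    rw [← hμ1, Measure.map_apply measurable_fst hB, prod_univ]
  have hsndB : ∀ (T : Set Y), MeasurableSet T → μ (univ ×ˢ T) = β T := by
    intro T hT
    rw [← hμ2, Measure.map_apply measurable_snd hT, univ_prod]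
  -- splitting
  have hsplit : (μ (B ×ˢ Bᶜ)).toReal = p - s := by
    have hdisj : Disjoint (B ×ˢ B) (B ×ˢ Bᶜ) :=
      Set.disjoint_prod.2 (Or.inr disjoint_compl_right)
    have hunion : B ×ˢ B ∪ B ×ˢ Bᶜ = B ×ˢ univ := by
      rw [← prod_union, union_compl_self]
    have := measure_union (μ := μ) hdisj (hB.prod hB.compl)
    rw [hunion, hfstB] at this
    have h2 := congrArg ENNReal.toReal this
    rw [ENNReal.toReal_add (measure_ne_top _ _) (measure_ne_top _ _)] at h2
    rw [hpdef, h2, hsdef]; ring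
  -- mean formulas
  have hintu1 : Integrable (fun w : Y × Y => u w.1) μ :=
    cont_integrable (hu.continuous.comp continuous_fst) μ
  have hintu2 : Integrable (fun w : Y × Y => u w.2) μ :=
    cont_integrable (hu.continuous.comp continuous_snd) μ
  have hrw1 : (fun w : Y × Y => B.indicator u w.1)
      = (B ×ˢ (univ : Set Y)).indicator (fun w => u w.1) := by
    funext w
    by_cases h : w.1 ∈ B <;> simp [Set.indicator, h]
  have hrw2 : (fun w : Y × Y => B.indicator u w.2)
      = ((univ : Set Y) ×ˢ B).indicator (fun w => u w.2) := by
    funext w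
    by_cases h : w.2 ∈ B <;> simp [Set.indicator, h]
  have hmα : (∫ y, u y ∂localTrunc α ε x) = p⁻¹ • ∫ w, B.indicator u w.1 ∂μ := by
    rw [localTrunc, integral_smul_measure, ENNReal.toReal_inv]
    congr 1
    rw [← integral_indicator hB, ← hμ1,
      integral_map measurable_fst.aemeasurable
        ((hu.continuous.aestronglyMeasurable).indicator hB)]
  have hmβ : (∫ y, u y ∂localTrunc β ε x) = q⁻¹ • ∫ w, B.indicator u w.2 ∂μ := by
    rw [localTrunc, integral_smul_measure, ENNReal.toReal_inv]
    congr 1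
    rw [← integral_indicator hB, ← hμ2,
      integral_map measurable_snd.aemeasurable
        ((hu.continuous.aestronglyMeasurable).indicator hB)]
  -- decomposition functions
  set F : Y × Y → E :=
    fun w => p⁻¹ • ((B ×ˢ B).indicator (fun z => u z.1 - u z.2) w) with hFdef
  set G1 : Y × Y → E :=
    fun w => (B ×ˢ Bᶜ).indicator (fun z => p⁻¹ • (u z.1 - u x)) w with hG1def
  set c2 : Y × Y → ℝ :=
    fun w => q⁻¹ * ((univ : Set Y) ×ˢ B).indicator 1 w
      - p⁻¹ * (B ×ˢ B).indicator 1 w with hc2def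
  set G2 : Y × Y → E := fun w => c2 w • (u w.2 - u x) with hG2def
  set H : Y × Y → E :=
    fun w => (B ×ˢ Bᶜ).indicator (fun _ => p⁻¹ • u x) w
      - (((univ : Set Y) ×ˢ B).indicator (fun _ => q⁻¹ • u x) w
        - (B ×ˢ B).indicator (fun _ => p⁻¹ • u x) w) with hHdef
  have hpoint : ∀ w : Y × Y,
      p⁻¹ • B.indicator u w.1 - q⁻¹ • B.indicator u w.2
        = F w + G1 w - G2 w + H w := by
    intro w
    by_cases h1 : w.1 ∈ B <;> by_cases h2 : w.2 ∈ B <;>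
      simp only [hFdef, hG1def, hc2def, hG2def, hHdef] <;>
      simp [Set.indicator_apply, Set.indicator, h1, h2, Set.mem_prod] <;>
      module
  -- integrability
  have hintf1 : Integrable (fun w : Y × Y => B.indicator u w.1) μ := by
    rw [hrw1]; exact hintu1.indicator (hB.prod MeasurableSet.univ)
  have hintf2 : Integrable (fun w : Y × Y => B.indicator u w.2) μ := by
    rw [hrw2]; exact hintu2.indicator (MeasurableSet.univ.prod hB)
  have hintF : Integrable F μ := by
    apply Integrable.smul
    exact ((cont_integrable ((hu.continuous.comp continuous_fst).sub
      (hu.continuous.comp continuous_snd)) μ).indicator (hB.prod hB))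
  have hintG1 : Integrable G1 μ :=
    ((cont_integrable ((hu.continuous.comp continuous_fst).sub continuous_const) μ).smul
      p⁻¹).indicator (hB.prod hB.compl)
  have hint1uB : Integrable (fun w : Y × Y => ((univ : Set Y) ×ˢ B).indicator 1 w) μ :=
    (integrable_const (1:ℝ)).indicator (MeasurableSet.univ.prod hB)
  have hint1BB : Integrable (fun w : Y × Y => (B ×ˢ B).indicator 1 w) μ :=
    (integrable_const (1:ℝ)).indicator (hB.prod hB)
  have hintc2 : Integrable c2 μ := by
    rw [hc2def]
    exact (hint1uB.const_mul _).sub (hint1BB.const_mul _)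
  have hintG2 : Integrable G2 μ := by
    have e1 : Integrable (fun w : Y × Y =>
        ((univ : Set Y) ×ˢ B).indicator (fun z => q⁻¹ • (u z.2 - u x)) w) μ :=
      ((cont_integrable ((hu.continuous.comp continuous_snd).sub continuous_const) μ).smul
        q⁻¹).indicator (MeasurableSet.univ.prod hB)
    have e2 : Integrable (fun w : Y × Y =>
        (B ×ˢ B).indicator (fun z => p⁻¹ • (u z.2 - u x)) w) μ :=
      ((cont_integrable ((hu.continuous.comp continuous_snd).sub continuous_const) μ).smul
        p⁻¹).indicator (hB.prod hB)
    refine (e1.sub e2).congr (ae_of_all _ fun w => ?_)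
    rw [hG2def, hc2def]
    by_cases h1 : w.1 ∈ B <;> by_cases h2 : w.2 ∈ B <;>
      simp [Set.indicator_apply, Set.indicator, h1, h2, Set.mem_prod, sub_smul]
  have hintH : Integrable H μ := by
    refine Integrable.sub ?_ (Integrable.sub ?_ ?_)
    · exact (integrable_const _).indicator (hB.prod hB.compl)
    · exact (integrable_const _).indicator (MeasurableSet.univ.prod hB)
    · exact (integrable_const _).indicator (hB.prod hB)
  -- the decomposition of the difference of means
  have hs1 : Integrable (fun a : Y × Y => p⁻¹ • B.indicator u a.1) μ := hintf1.smul p⁻¹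
  have hs2 : Integrable (fun a : Y × Y => q⁻¹ • B.indicator u a.2) μ := hintf2.smul q⁻¹
  have hFG1 : Integrable (fun w : Y × Y => F w + G1 w) μ := hintF.add hintG1
  have hFG12 : Integrable (fun w : Y × Y => F w + G1 w - G2 w) μ := hFG1.sub hintG2
  have hΔ : (∫ y, u y ∂localTrunc α ε x) - (∫ y, u y ∂localTrunc β ε x)
      = (∫ w, F w ∂μ) + (∫ w, G1 w ∂μ) - (∫ w, G2 w ∂μ) + (∫ w, H w ∂μ) := by
    have step1 : (∫ y, u y ∂localTrunc α ε x) - (∫ y, u y ∂localTrunc β ε x)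
        = ∫ w, (p⁻¹ • B.indicator u w.1 - q⁻¹ • B.indicator u w.2) ∂μ := by
      rw [integral_sub hs1 hs2, integral_smul, integral_smul, hmα, hmβ]
    rw [step1]
    have step2 : ∫ w, (p⁻¹ • B.indicator u w.1 - q⁻¹ • B.indicator u w.2) ∂μ
        = ∫ w, (F w + G1 w - G2 w + H w) ∂μ :=
      integral_congr_ae (ae_of_all _ fun w => hpoint w)
    rw [step2, integral_add hFG12 hintH, integral_sub hFG1 hintG2,
      integral_add hintF hintG1]
  -- ∫ H = 0
  have iA : Integrable (fun w : Y × Y =>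
      (B ×ˢ Bᶜ).indicator (fun _ => p⁻¹ • u x) w) μ :=
    (integrable_const _).indicator (hB.prod hB.compl)
  have iB : Integrable (fun w : Y × Y =>
      ((univ : Set Y) ×ˢ B).indicator (fun _ => q⁻¹ • u x) w) μ :=
    (integrable_const _).indicator (MeasurableSet.univ.prod hB)
  have iC : Integrable (fun w : Y × Y =>
      (B ×ˢ B).indicator (fun _ => p⁻¹ • u x) w) μ :=
    (integrable_const _).indicator (hB.prod hB)
  have hHzero : (∫ w, H w ∂μ) = 0 := by
    have : (∫ w, H w ∂μ) = ∫ w, ((B ×ˢ Bᶜ).indicator (fun _ => p⁻¹ • u x) w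
        - (((univ : Set Y) ×ˢ B).indicator (fun _ => q⁻¹ • u x) w
          - (B ×ˢ B).indicator (fun _ => p⁻¹ • u x) w)) ∂μ := rfl
    have iBC : Integrable (fun w : Y × Y =>
        ((univ : Set Y) ×ˢ B).indicator (fun _ => q⁻¹ • u x) w
          - (B ×ˢ B).indicator (fun _ => p⁻¹ • u x) w) μ := iB.sub iC
    rw [this, integral_sub iA iBC, integral_sub iB iC,
      integral_indicator_const _ (hB.prod hB.compl),
      integral_indicator_const _ (MeasurableSet.univ.prod hB),
      integral_indicator_const _ (hB.prod hB)]
    simp only [measureReal_def]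
    rw [hsndB B hB, hsplit]
    have hqq : (β B).toReal = q := rfl
    have hss : (μ (B ×ˢ B)).toReal = s := rfl
    rw [hqq, hss, smul_smul, smul_smul, smul_smul, ← sub_smul, ← sub_smul]
    have : (p - s) * p⁻¹ - (q * q⁻¹ - s * p⁻¹) = 0 := by field_simp; ring
    rw [this, zero_smul]
  -- basic facts
  have hpinv : (0:ℝ) ≤ p⁻¹ := inv_nonneg.2 hp0.le
  have hintdist : Integrable (fun w : Y × Y => dist w.1 w.2) μ :=
    cont_integrable continuous_dist μ
  have hWnn : (0:ℝ) ≤ W' := integral_nonneg fun w => dist_nonneg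
  -- bound on F
  have hnF : ‖∫ w, F w ∂μ‖ ≤ p⁻¹ * W' := by
    calc ‖∫ w, F w ∂μ‖ ≤ ∫ w, ‖F w‖ ∂μ := norm_integral_le_integral_norm _
      _ ≤ ∫ w, p⁻¹ * dist w.1 w.2 ∂μ := by
          refine integral_mono hintF.norm (hintdist.const_mul _) fun w => ?_
          by_cases hw : w ∈ B ×ˢ B
          · rw [hFdef]
            simp only [Set.indicator_of_mem hw, norm_smul, Real.norm_eq_abs,
              abs_of_nonneg hpinv]
            have : ‖u w.1 - u w.2‖ = dist w.1 w.2 := by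
              rw [← dist_eq_norm, hu.dist_eq]
            rw [this]
          · rw [hFdef]
            simp only [Set.indicator_of_notMem hw, smul_zero, norm_zero]
            positivity
      _ = p⁻¹ * W' := by rw [integral_const_mul]
  -- bound on G1
  have hnG1 : ‖∫ w, G1 w ∂μ‖ ≤ ε * (p⁻¹ * (p - s)) := by
    have hb : ∀ w : Y × Y, ‖G1 w‖ ≤ (B ×ˢ Bᶜ).indicator (fun _ => p⁻¹ * ε) w := by
      intro w
      by_cases hw : w ∈ B ×ˢ Bᶜ
      · rw [hG1def]
        simp only [Set.indicator_of_mem hw, norm_smul, Real.norm_eq_abs,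
          abs_of_nonneg hpinv]
        have : ‖u w.1 - u x‖ = dist w.1 x := by rw [← dist_eq_norm, hu.dist_eq]
        rw [this]
        exact mul_le_mul_of_nonneg_left (mem_closedBall.1 hw.1) hpinv
      · rw [hG1def]
        simp [Set.indicator_of_notMem hw]
    calc ‖∫ w, G1 w ∂μ‖ ≤ ∫ w, ‖G1 w‖ ∂μ := norm_integral_le_integral_norm _
      _ ≤ ∫ w, (B ×ˢ Bᶜ).indicator (fun _ => p⁻¹ * ε) w ∂μ :=
          integral_mono hintG1.norm
            ((integrable_const _).indicator (hB.prod hB.compl)) hb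
      _ = (μ (B ×ˢ Bᶜ)).toReal • (p⁻¹ * ε) :=
          integral_indicator_const _ (hB.prod hB.compl)
      _ = ε * (p⁻¹ * (p - s)) := by rw [hsplit]; ring_nf
  -- bound on G2
  have hc2nn : ∀ w : Y × Y, 0 ≤ c2 w := by
    intro w
    rw [hc2def]
    by_cases h1 : w.1 ∈ B <;> by_cases h2 : w.2 ∈ B <;>
      simp [Set.indicator_apply, Set.indicator, h1, h2, Set.mem_prod]
    · have : p⁻¹ ≤ q⁻¹ := inv_anti₀ hq0 hq
      linarith
    · positivity
  have hc2ε : ∀ w : Y × Y, ‖G2 w‖ ≤ ε * c2 w := by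
    intro w
    by_cases h2 : w.2 ∈ B
    · rw [hG2def]
      simp only [norm_smul, Real.norm_eq_abs, abs_of_nonneg (hc2nn w)]
      have : ‖u w.2 - u x‖ = dist w.2 x := by rw [← dist_eq_norm, hu.dist_eq]
      rw [this, mul_comm ε (c2 w)]
      exact mul_le_mul_of_nonneg_left (mem_closedBall.1 h2) (hc2nn w)
    · have hz : c2 w = 0 := by
        rw [hc2def]
        simp [Set.indicator_apply, Set.indicator, h2, Set.mem_prod]
      simp [hG2def, hz]
  have hintc2' : (∫ w, c2 w ∂μ) = 1 - p⁻¹ * s := by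
    have e : (∫ w, c2 w ∂μ) = q⁻¹ * (μ ((univ : Set Y) ×ˢ B)).toReal
        - p⁻¹ * (μ (B ×ˢ B)).toReal := by
      have : (∫ w, c2 w ∂μ) = ∫ w, (q⁻¹ * ((univ : Set Y) ×ˢ B).indicator 1 w
          - p⁻¹ * (B ×ˢ B).indicator 1 w) ∂μ := rfl
      rw [this, integral_sub (hint1uB.const_mul _) (hint1BB.const_mul _),
        integral_const_mul, integral_const_mul,
        integral_indicator_one (MeasurableSet.univ.prod hB),
        integral_indicator_one (hB.prod hB)]
      simp only [measureReal_def]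
    rw [e, hsndB B hB]
    have : (β B).toReal = q := rfl
    rw [this, inv_mul_cancel₀ hq0.ne']
  have hnG2 : ‖∫ w, G2 w ∂μ‖ ≤ ε * (p⁻¹ * (p - s)) := by
    have e1 : 1 - p⁻¹ * s = p⁻¹ * (p - s) := by field_simp
    calc ‖∫ w, G2 w ∂μ‖ ≤ ∫ w, ‖G2 w‖ ∂μ := norm_integral_le_integral_norm _
      _ ≤ ∫ w, ε * c2 w ∂μ :=
          integral_mono hintG2.norm (hintc2.const_mul _) hc2ε
      _ = ε * (1 - p⁻¹ * s) := by rw [integral_const_mul, hintc2']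
      _ = ε * (p⁻¹ * (p - s)) := by rw [e1]
  -- bound on p - s
  have hBB' : B ⊆ B' := closedBall_subset_closedBall (by linarith)
  have hps : p - s ≤ W' / η' + p * φ := by
    have hsubset : B ×ˢ Bᶜ ⊆ {w : Y × Y | η' ≤ dist w.1 w.2}
        ∪ (univ : Set Y) ×ˢ (B' \ B) := by
      rintro ⟨w1, w2⟩ ⟨hw1, hw2⟩
      rcases le_or_gt η' (dist w1 w2) with h | h
      · exact Or.inl h
      · refine Or.inr ⟨mem_univ _, ?_, hw2⟩
        have h1 : dist w2 x ≤ dist w2 w1 + dist w1 x := dist_triangle _ _ _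
        have h2 : dist w2 w1 < η' := by rw [dist_comm]; exact h
        have h3 : dist w1 x ≤ ε := mem_closedBall.1 hw1
        exact mem_closedBall.2 (by linarith)
    have hmeas1 : MeasurableSet {w : Y × Y | η' ≤ dist w.1 w.2} :=
      measurableSet_le measurable_const continuous_dist.measurable
    have hm : (μ (B ×ˢ Bᶜ)).toReal ≤ (μ {w : Y × Y | η' ≤ dist w.1 w.2}).toReal
        + (μ ((univ : Set Y) ×ˢ (B' \ B))).toReal := by
      have h1 : μ (B ×ˢ Bᶜ) ≤ μ {w : Y × Y | η' ≤ dist w.1 w.2}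
          + μ ((univ : Set Y) ×ˢ (B' \ B)) :=
        (measure_mono hsubset).trans (measure_union_le _ _)
      have h2 := ENNReal.toReal_mono
        (ENNReal.add_ne_top.2 ⟨measure_ne_top _ _, measure_ne_top _ _⟩) h1
      rwa [ENNReal.toReal_add (measure_ne_top _ _) (measure_ne_top _ _)] at h2
    have hmark : (μ {w : Y × Y | η' ≤ dist w.1 w.2}).toReal ≤ W' / η' := by
      have := mul_meas_ge_le_integral_of_nonneg
        (ae_of_all μ fun w : Y × Y => dist_nonneg) hintdist η'
      rw [le_div_iff₀ hη']
      calc (μ {w : Y × Y | η' ≤ dist w.1 w.2}).toReal * η'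
          = η' * (μ {w : Y × Y | η' ≤ dist w.1 w.2}).toReal := by ring
        _ ≤ W' := this
    have hann2 : (μ ((univ : Set Y) ×ˢ (B' \ B))).toReal ≤ p * φ := by
      rw [hsndB _ (hB'.diff hB), measure_diff hBB' hB.nullMeasurableSet
        (measure_ne_top _ _), ENNReal.toReal_sub_of_le (measure_mono hBB')
        (measure_ne_top _ _)]
      have h1 : (β B').toReal - (β B).toReal ≤ q * (1 + φ) - q := by
        have : (β B).toReal = q := rfl
        rw [this]; linarith [hann]
      have h2 : q * (1 + φ) - q = q * φ := by ring
      have h3 : q * φ ≤ p * φ := mul_le_mul_of_nonneg_right hq hφ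
      linarith
    rw [← hsplit]
    linarith
  -- final assembly
  rw [hΔ, hHzero, add_zero]
  have hnorm3 : ‖(∫ w, F w ∂μ) + (∫ w, G1 w ∂μ) - ∫ w, G2 w ∂μ‖
      ≤ ‖∫ w, F w ∂μ‖ + ‖∫ w, G1 w ∂μ‖ + ‖∫ w, G2 w ∂μ‖ := by
    have h1 := norm_sub_le ((∫ w, F w ∂μ) + (∫ w, G1 w ∂μ)) (∫ w, G2 w ∂μ)
    have h2 := norm_add_le (∫ w, F w ∂μ) (∫ w, G1 w ∂μ)
    linarith
  have hkey : p⁻¹ * (p - s) ≤ p⁻¹ * (W' / η') + φ := by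
    calc p⁻¹ * (p - s) ≤ p⁻¹ * (W' / η' + p * φ) :=
          mul_le_mul_of_nonneg_left hps hpinv
      _ = p⁻¹ * (W' / η') + p⁻¹ * (p * φ) := by ring
      _ = p⁻¹ * (W' / η') + φ := by
          rw [← mul_assoc, inv_mul_cancel₀ hp0.ne', one_mul]
  have hrhs : (W' + 2 * ε * (W' / η')) / p + 2 * ε * φ
      = p⁻¹ * W' + 2 * ε * (p⁻¹ * (W' / η')) + 2 * ε * φ := by
    field_simp
  rw [hrhs]
  have hfin : ε * (p⁻¹ * (p - s)) ≤ ε * (p⁻¹ * (W' / η') + φ) :=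
    mul_le_mul_of_nonneg_left hkey hε.le
  linarith

end Master

lemma annulus_real {Y : Type*} [MeasurableSpace Y] [PseudoMetricSpace Y]
    (γ : Measure Y) [IsFiniteMeasure γ] {Λ ε η' : ℝ} (hΛ : 0 < Λ) (hε : 0 < ε)
    (hη' : 0 < η') (hfull : msupport γ = univ) (hγ : DoublingCond γ Λ) (x : Y)
    (h0 : γ (closedBall x ε) ≠ 0) :
    (γ (closedBall x (ε + η'))).toReal ≤
      (γ (closedBall x ε)).toReal * (1 + ((1 + η' / ε) ^ Λ - 1)) := by
  have hmem : x ∈ msupport γ := hfull ▸ mem_univ x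
  have h := hγ x hmem (ε + η') ε (by linarith) hε
  have hbase : (ε + η') / ε = 1 + η' / ε := by field_simp
  rw [hbase] at h
  have h2 : γ (closedBall x (ε + η')) ≤
      ENNReal.ofReal ((1 + η' / ε) ^ Λ) * γ (closedBall x ε) :=
    (ENNReal.div_le_iff_le_mul (Or.inl h0) (Or.inl (measure_ne_top _ _))).1 h
  have h3 := ENNReal.toReal_mono
    (ENNReal.mul_ne_top ENNReal.ofReal_ne_top (measure_ne_top _ _)) h2
  rw [ENNReal.toReal_mul, ENNReal.toReal_ofReal
    (Real.rpow_nonneg (by positivity) _)] at h3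
  calc (γ (closedBall x (ε + η'))).toReal
      ≤ (1 + η' / ε) ^ Λ * (γ (closedBall x ε)).toReal := h3
    _ = (γ (closedBall x ε)).toReal * (1 + ((1 + η' / ε) ^ Λ - 1)) := by ring

/-- **Stability of mean shift for local truncations** (Theorem 5 of the paper).
For a compact subset X of ℝⁿ with diam(X) < D and fully supported Λ-doubling Borel
probability measures α, β on X, the barycenters of the ε-local truncations satisfy
`‖mean(m_α^{(ε)}(x)) − mean(m_β^{(ε)}(x))‖ ≤ (1+2ε) Φ_{Λ,D,ε}(√(d_{W,1}(α,β)))` for all x. -/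
theorem stability_of_mean_shift
    {n : ℕ} (X : Set (EuclideanSpace ℝ (Fin n))) (hX : IsCompact X)
    (D Λ ε : ℝ) (hD : Metric.diam X < D) (hΛ : 0 < Λ) (hε : 0 < ε)
    (α β : Measure ↥X) [IsProbabilityMeasure α] [IsProbabilityMeasure β]
    (hαfull : msupport α = Set.univ) (hβfull : msupport β = Set.univ)
    (hα : DoublingCond α Λ) (hβ : DoublingCond β Λ) :
    ∀ x : ↥X,
      ‖(∫ y, (y : EuclideanSpace ℝ (Fin n)) ∂(localTrunc α ε x)) -
        ∫ y, (y : EuclideanSpace ℝ (Fin n)) ∂(localTrunc β ε x)‖ ≤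
      (1 + 2 * ε) * PhiLDE Λ D ε (Real.sqrt (wassersteinDist α β)) := by
  intro x
  haveI : CompactSpace ↥X := isCompact_iff_compactSpace.mp hX
  have hu : Isometry (fun y : ↥X => (y : EuclideanSpace ℝ (Fin n))) :=
    isometry_subtype_coe
  have hD0 : 0 < D := lt_of_le_of_lt diam_nonneg hD
  have hdiam : ∀ y z : ↥X, dist y z ≤ D := fun y z => by
    rw [Subtype.dist_eq]
    exact (dist_le_diam_of_mem hX.isBounded y.2 z.2).trans hD.le
  have hψ0 : 0 < psiLD Λ D ε := psiLD_pos hΛ hε hD0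
  have hψ1 : psiLD Λ D ε ≤ 1 := min_le_left _ _
  have hpα : ∀ z : ↥X, psiLD Λ D ε ≤ (α (closedBall z ε)).toReal := fun z =>
    mass_lb_real α hΛ hε hD0 hdiam hαfull hα z
  have hpβ : ∀ z : ↥X, psiLD Λ D ε ≤ (β (closedBall z ε)).toReal := fun z =>
    mass_lb_real β hΛ hε hD0 hdiam hβfull hβ z
  have hα0 : α (closedBall x ε) ≠ 0 :=
    (lt_of_lt_of_le (ENNReal.ofReal_pos.2 hψ0)
      (mass_lb α hΛ hε hD0 hdiam hαfull hα x)).ne'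
  have hβ0 : β (closedBall x ε) ≠ 0 :=
    (lt_of_lt_of_le (ENNReal.ofReal_pos.2 hψ0)
      (mass_lb β hΛ hε hD0 hdiam hβfull hβ x)).ne'
  have h2ε : ‖(∫ y, (y : EuclideanSpace ℝ (Fin n)) ∂(localTrunc α ε x)) -
      ∫ y, (y : EuclideanSpace ℝ (Fin n)) ∂(localTrunc β ε x)‖ ≤ 2 * ε := by
    have h1 := mean_dist_le _ hu α hα0
    have h2 := mean_dist_le _ hu β hβ0
    have h3 := norm_sub_le
      ((∫ y, (y : EuclideanSpace ℝ (Fin n)) ∂(localTrunc α ε x)) - (x : EuclideanSpace ℝ (Fin n)))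
      ((∫ y, (y : EuclideanSpace ℝ (Fin n)) ∂(localTrunc β ε x)) - (x : EuclideanSpace ℝ (Fin n)))
    rw [sub_sub_sub_cancel_right] at h3
    linarith
  have hWnn : 0 ≤ wassersteinDist α β := by
    rw [wassersteinDist]
    refine Real.sInf_nonneg ?_
    rintro r ⟨μ, -, rfl⟩
    exact integral_nonneg fun w => dist_nonneg
  have hne : ((fun μ : Measure (↥X × ↥X) => ∫ p, dist p.1 p.2 ∂μ) ''
      {μ | μ.map Prod.fst = α ∧ μ.map Prod.snd = β}).Nonempty := by
    refine ⟨_, ⟨α.prod β, ⟨?_, ?_⟩, rfl⟩⟩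
    · rw [Measure.map_fst_prod]; simp
    · rw [Measure.map_snd_prod]; simp
  have hφnn : ∀ η' : ℝ, 0 < η' → 0 ≤ (1 + η' / ε) ^ Λ - 1 := by
    intro η' hη'
    have h1 : (1:ℝ) ≤ 1 + η' / ε := by
      have := div_pos hη' hε; linarith
    have : (1:ℝ) ≤ (1 + η' / ε) ^ Λ := by
      calc (1:ℝ) = 1 ^ Λ := (Real.one_rpow _).symm
        _ ≤ (1 + η' / ε) ^ Λ := Real.rpow_le_rpow (by norm_num) h1 hΛ.le
    linarith
  have key : ∀ η' : ℝ, 0 < η' → ∀ W'' : ℝ, wassersteinDist α β < W'' →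
      ‖(∫ y, (y : EuclideanSpace ℝ (Fin n)) ∂(localTrunc α ε x)) -
        ∫ y, (y : EuclideanSpace ℝ (Fin n)) ∂(localTrunc β ε x)‖ ≤
      W'' * (1 + 2 * ε / η') / psiLD Λ D ε + 2 * ε * ((1 + η' / ε) ^ Λ - 1) := by
    intro η' hη' W'' hW''
    rw [wassersteinDist] at hW''
    obtain ⟨r, ⟨μ, ⟨hm1, hm2⟩, rfl⟩, hrlt⟩ := exists_lt_of_csInf_lt hne hW''
    have hc' : (0:ℝ) < 1 + 2 * ε / η' := by positivity
    have hInn : 0 ≤ ∫ w : ↥X × ↥X, dist w.1 w.2 ∂μ :=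
      integral_nonneg fun w => dist_nonneg
    have hW''nn : 0 ≤ W'' := le_of_lt (lt_of_le_of_lt hInn hrlt)
    have hnum : (∫ w : ↥X × ↥X, dist w.1 w.2 ∂μ) +
        2 * ε * ((∫ w : ↥X × ↥X, dist w.1 w.2 ∂μ) / η') ≤ W'' * (1 + 2 * ε / η') := by
      have h1 : (∫ w : ↥X × ↥X, dist w.1 w.2 ∂μ) +
          2 * ε * ((∫ w : ↥X × ↥X, dist w.1 w.2 ∂μ) / η')
          = (∫ w : ↥X × ↥X, dist w.1 w.2 ∂μ) * (1 + 2 * ε / η') := by ring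
      rw [h1]
      exact mul_le_mul_of_nonneg_right hrlt.le hc'.le
    rcases le_total (β (closedBall x ε)).toReal (α (closedBall x ε)).toReal with hc | hc
    · have hb := master _ hu α β μ hm1 hm2 x hε hη' (hφnn η' hη')
        (lt_of_lt_of_le hψ0 (hpα x)) (lt_of_lt_of_le hψ0 (hpβ x)) hc
        (annulus_real β hΛ hε hη' hβfull hβ x hβ0)
      refine hb.trans (add_le_add ?_ le_rfl)
      exact div_le_div₀ (by positivity) hnum hψ0 (hpα x)
    · have hsw1 : (μ.map Prod.swap).map Prod.fst = β := by
        rw [Measure.map_map measurable_fst measurable_swap]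
        exact hm2
      have hsw2 : (μ.map Prod.swap).map Prod.snd = α := by
        rw [Measure.map_map measurable_snd measurable_swap]
        exact hm1
      have hIsw : (∫ w : ↥X × ↥X, dist w.1 w.2 ∂(μ.map Prod.swap))
          = ∫ w : ↥X × ↥X, dist w.1 w.2 ∂μ := by
        rw [integral_map measurable_swap.aemeasurable
          continuous_dist.aestronglyMeasurable]
        simp [dist_comm]
      have hb := master _ hu β α (μ.map Prod.swap) hsw1 hsw2 x hε hη' (hφnn η' hη')
        (lt_of_lt_of_le hψ0 (hpβ x)) (lt_of_lt_of_le hψ0 (hpα x)) hc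
        (annulus_real α hΛ hε hη' hαfull hα x hα0)
      rw [hIsw] at hb
      rw [norm_sub_rev]
      refine hb.trans (add_le_add ?_ le_rfl)
      exact div_le_div₀ (by positivity) hnum hψ0 (hpβ x)
  have key2 : ∀ η' : ℝ, 0 < η' →
      ‖(∫ y, (y : EuclideanSpace ℝ (Fin n)) ∂(localTrunc α ε x)) -
        ∫ y, (y : EuclideanSpace ℝ (Fin n)) ∂(localTrunc β ε x)‖ ≤
      wassersteinDist α β * (1 + 2 * ε / η') / psiLD Λ D ε
        + 2 * ε * ((1 + η' / ε) ^ Λ - 1) := by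
    intro η' hη'
    refine le_of_forall_pos_le_add fun δ hδ => ?_
    have hc' : (0:ℝ) < 1 + 2 * ε / η' := by positivity
    have hW'' : wassersteinDist α β <
        wassersteinDist α β + δ * psiLD Λ D ε / (1 + 2 * ε / η') :=
      lt_add_of_pos_right _ (by positivity)
    have hb := key η' hη' _ hW''
    have heq : (wassersteinDist α β + δ * psiLD Λ D ε / (1 + 2 * ε / η'))
        * (1 + 2 * ε / η') / psiLD Λ D ε
        = wassersteinDist α β * (1 + 2 * ε / η') / psiLD Λ D ε + δ := by
      field_simp
    rw [heq] at hb
    linarith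
  rcases eq_or_lt_of_le hWnn with hW0 | hWpos
  · have hη0 : Real.sqrt (wassersteinDist α β) = 0 := by
      rw [← hW0, Real.sqrt_zero]
    have hPhi : PhiLDE Λ D ε (Real.sqrt (wassersteinDist α β)) = 0 := by
      rw [hη0, PhiLDE]
      simp [Real.one_rpow]
    rw [hPhi, mul_zero]
    refine le_of_forall_pos_le_add fun κ hκ => ?_
    rw [zero_add]
    have hκ'0 : 0 < κ / (2 * ε + 1) := by positivity
    have hgt1 : 1 < (1 + κ / (2 * ε + 1)) ^ Λ⁻¹ := by
      rw [Real.one_lt_rpow_iff_of_pos (by positivity)]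
      exact Or.inl ⟨by linarith, by positivity⟩
    set η' := ε * ((1 + κ / (2 * ε + 1)) ^ Λ⁻¹ - 1) with hη'def
    have hη'0 : 0 < η' := mul_pos hε (by linarith)
    have hφval : (1 + η' / ε) ^ Λ - 1 = κ / (2 * ε + 1) := by
      have h1 : 1 + η' / ε = (1 + κ / (2 * ε + 1)) ^ Λ⁻¹ := by
        rw [hη'def]; field_simp; ring
      rw [h1, ← Real.rpow_mul (by positivity), inv_mul_cancel₀ hΛ.ne',
        Real.rpow_one]
      ring
    have hb := key2 η' hη'0
    rw [← hW0, hφval] at hb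
    have hb2 : ‖(∫ y, (y : EuclideanSpace ℝ (Fin n)) ∂(localTrunc α ε x)) -
        ∫ y, (y : EuclideanSpace ℝ (Fin n)) ∂(localTrunc β ε x)‖ ≤
        2 * ε * (κ / (2 * ε + 1)) := by
      rw [zero_mul, zero_div] at hb
      linarith
    have h9 : 2 * ε * (κ / (2 * ε + 1)) ≤ κ := by
      rw [mul_div_assoc'] 
      rw [div_le_iff₀ (by positivity : (0:ℝ) < 2 * ε + 1)]
      nlinarith
    linarith
  · set η := Real.sqrt (wassersteinDist α β) with hηdef
    have hη0 : 0 < η := Real.sqrt_pos.2 hWpos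
    have hWη : η * η = wassersteinDist α β := Real.mul_self_sqrt hWnn
    have hφ := hφnn η hη0
    have hRHS : PhiLDE Λ D ε η = η / psiLD Λ D ε + ((1 + η / ε) ^ Λ - 1) := rfl
    rcases le_or_gt η 1 with hη1 | hη1
    · have hb := key2 η hη0
      have heq : wassersteinDist α β * (1 + 2 * ε / η) = η * η + 2 * ε * η := by
        rw [← hWη]; field_simp
      rw [heq] at hb
      have h1 : (η * η + 2 * ε * η) / psiLD Λ D ε ≤ (1 + 2 * ε) * η / psiLD Λ D ε := by
        gcongr
        nlinarith
      have h2 : 2 * ε * ((1 + η / ε) ^ Λ - 1) ≤ (1 + 2 * ε) * ((1 + η / ε) ^ Λ - 1) :=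
        mul_le_mul_of_nonneg_right (by linarith) hφ
      calc ‖(∫ y, (y : EuclideanSpace ℝ (Fin n)) ∂(localTrunc α ε x)) -
          ∫ y, (y : EuclideanSpace ℝ (Fin n)) ∂(localTrunc β ε x)‖
          ≤ (η * η + 2 * ε * η) / psiLD Λ D ε + 2 * ε * ((1 + η / ε) ^ Λ - 1) := hb
        _ ≤ (1 + 2 * ε) * η / psiLD Λ D ε
            + (1 + 2 * ε) * ((1 + η / ε) ^ Λ - 1) := by linarith
        _ = (1 + 2 * ε) * PhiLDE Λ D ε η := by rw [hRHS]; ring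
    · have hηψ : 1 ≤ η / psiLD Λ D ε := by
        rw [le_div_iff₀ hψ0]
        nlinarith
      calc ‖(∫ y, (y : EuclideanSpace ℝ (Fin n)) ∂(localTrunc α ε x)) -
          ∫ y, (y : EuclideanSpace ℝ (Fin n)) ∂(localTrunc β ε x)‖
          ≤ 2 * ε := h2ε
        _ ≤ (1 + 2 * ε) * (η / psiLD Λ D ε + ((1 + η / ε) ^ Λ - 1)) := by nlinarith
        _ = (1 + 2 * ε) * PhiLDE Λ D ε η := by rw [hRHS]
end

section
/- Let (X,d) be a compact metric space with diam(X) < D, let ε > 0, and let α, β be fully supported Borel probability measures on X each satisfying the Λ-doubling condition for some Λ > 0. Then for every x ∈ X, the Prokhorov distance satisfies d_P(m_α^{(ε)}(x), m_β^{(ε)}(x)) ≤ Φ_{Λ,D,ε}(d_P(α,β)). -/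
open MeasureTheory Metric Set Filter
open scoped ENNReal NNReal

-- helper: apply formula
lemma localTrunc_apply {X : Type*} [MeasurableSpace X] [MetricSpace X] [BorelSpace X]
    (α : Measure X) (ε : ℝ) (x : X) (A : Set X) :
    localTrunc α ε x A = (α (closedBall x ε))⁻¹ * α (A ∩ closedBall x ε) := by
  simp [localTrunc, Measure.smul_apply, smul_eq_mul,
    Measure.restrict_apply' measurableSet_closedBall]

-- symmetry of the one-sided Prokhorov condition
lemma prok_sym {X : Type*} [MetricSpace X] [MeasurableSpace X] [BorelSpace X]
    (α β : Measure X) (hα1 : α Set.univ = 1) (hβ1 : β Set.univ = 1) (δ : ℝ)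
    (h : ∀ A : Set X, α A ≤ β (thickening δ A) + ENNReal.ofReal δ) :
    ∀ A : Set X, β A ≤ α (thickening δ A) + ENNReal.ofReal δ := by
  intro A
  have hc : β A ≤ β (closure A) := measure_mono subset_closure
  rw [← thickening_closure]
  refine hc.trans ?_
  set C := closure A with hC
  set T := thickening δ C with hT
  have hsub : thickening δ Tᶜ ⊆ Cᶜ := by
    intro z hz
    obtain ⟨w, hw, hdw⟩ := mem_thickening_iff.mp hz
    intro hzC
    exact hw (mem_thickening_iff.mpr ⟨z, hzC, by rwa [dist_comm] at hdw⟩)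
  have h1 : α Tᶜ ≤ β Cᶜ + ENNReal.ofReal δ :=
    (h Tᶜ).trans (add_le_add_left (measure_mono hsub) _)
  have hTm : MeasurableSet T := isOpen_thickening.measurableSet
  have hCm : MeasurableSet C := isClosed_closure.measurableSet
  have hαT : α T ≠ ⊤ := ((le_trans (measure_mono (subset_univ T)) hα1.le).trans_lt ENNReal.one_lt_top).ne
  have hβC : β C ≠ ⊤ := ((le_trans (measure_mono (subset_univ C)) hβ1.le).trans_lt ENNReal.one_lt_top).ne
  rw [measure_compl hTm hαT, measure_compl hCm hβC, hα1, hβ1] at h1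
  have hβC1 : β C ≤ 1 := hβ1 ▸ measure_mono (subset_univ C)
  have h2 : 1 ≤ (1 - β C + ENNReal.ofReal δ) + α T := tsub_le_iff_right.mp h1
  have h3 : β C = 1 - (1 - β C) := (ENNReal.sub_sub_cancel (by norm_num) hβC1).symm
  rw [h3]
  rw [tsub_le_iff_right]
  calc (1:ℝ≥0∞) ≤ (1 - β C + ENNReal.ofReal δ) + α T := h2
    _ = α T + ENNReal.ofReal δ + (1 - β C) := by ring

-- lower bound for ball mass
lemma ball_lower {X : Type*} [MetricSpace X] [CompactSpace X] [MeasurableSpace X] [BorelSpace X]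
    (D Λ ε : ℝ) (hD : Metric.diam (Set.univ : Set X) < D) (hΛ : 0 < Λ) (hε : 0 < ε)
    (α : Measure X) [IsProbabilityMeasure α] (hfull : msupport α = Set.univ)
    (hα : DoublingCond α Λ) (x : X) :
    ENNReal.ofReal (psiLD Λ D ε) ≤ α (closedBall x ε) := by
  have hD0 : 0 < D := lt_of_le_of_lt diam_nonneg hD
  have hx : x ∈ msupport α := hfull ▸ mem_univ x
  have hpos : 0 < α (closedBall x ε) := hx _ (closedBall_mem_nhds x hε)
  have hballD : closedBall x D = univ := by
    apply eq_univ_of_forall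
    intro y
    exact mem_closedBall.mpr <| le_trans
      (dist_le_diam_of_mem isCompact_univ.isBounded (mem_univ y) (mem_univ x)) hD.le
  rcases le_or_gt D ε with hDε | hεD
  · have : closedBall x ε = univ := eq_univ_of_univ_subset
      (hballD ▸ closedBall_subset_closedBall hDε)
    rw [this, measure_univ]
    exact ENNReal.ofReal_le_one.mpr (min_le_left _ _)
  · have hdb := hα x hx D ε hεD.le hε
    rw [hballD, measure_univ] at hdb
    have hne : α (closedBall x ε) ≠ 0 := hpos.ne'
    have hnt : α (closedBall x ε) ≠ ⊤ := (measure_lt_top α _).ne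
    have h1 : (1:ℝ≥0∞) ≤ ENNReal.ofReal ((D / ε) ^ Λ) * α (closedBall x ε) :=
      (ENNReal.div_le_iff_le_mul (Or.inl hne) (Or.inl hnt)).mp hdb
    have hrp : (0:ℝ) < (D / ε) ^ Λ := Real.rpow_pos_of_pos (div_pos hD0 hε) Λ
    have hc0 : (ENNReal.ofReal ((D / ε) ^ Λ)) ≠ 0 := by
      simp [ENNReal.ofReal_eq_zero, not_le, hrp]
    have hct : (ENNReal.ofReal ((D / ε) ^ Λ)) ≠ ⊤ := ENNReal.ofReal_ne_top
    have h2 : (ENNReal.ofReal ((D / ε) ^ Λ))⁻¹ ≤ α (closedBall x ε) := by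
      calc (ENNReal.ofReal ((D / ε) ^ Λ))⁻¹
          = (ENNReal.ofReal ((D / ε) ^ Λ))⁻¹ * 1 := (mul_one _).symm
        _ ≤ (ENNReal.ofReal ((D / ε) ^ Λ))⁻¹ *
            (ENNReal.ofReal ((D / ε) ^ Λ) * α (closedBall x ε)) := by
            exact mul_le_mul_right h1 _
        _ = α (closedBall x ε) := by
            rw [← mul_assoc, ENNReal.inv_mul_cancel hc0 hct, one_mul]
    refine le_trans ?_ h2
    have heq : (ε / D) ^ Λ = ((D / ε) ^ Λ)⁻¹ := by
      rw [← Real.inv_rpow (div_nonneg hD0.le hε.le), inv_div]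
    calc ENNReal.ofReal (psiLD Λ D ε) ≤ ENNReal.ofReal ((ε / D) ^ Λ) :=
          ENNReal.ofReal_le_ofReal (min_le_right _ _)
      _ = (ENNReal.ofReal ((D / ε) ^ Λ))⁻¹ := by
          rw [heq, ENNReal.ofReal_inv_of_pos hrp]

-- doubling upper bound
lemma ball_upper {X : Type*} [MetricSpace X] [MeasurableSpace X] [BorelSpace X]
    (Λ ε δ : ℝ) (hε : 0 < ε) (hδ : 0 ≤ δ)
    (α : Measure X) [IsProbabilityMeasure α] (hfull : msupport α = Set.univ)
    (hα : DoublingCond α Λ) (x : X) :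
    α (closedBall x (ε + δ)) ≤ ENNReal.ofReal ((1 + δ / ε) ^ Λ) * α (closedBall x ε) := by
  have hx : x ∈ msupport α := hfull ▸ mem_univ x
  have hpos : 0 < α (closedBall x ε) := hx _ (closedBall_mem_nhds x hε)
  have hne : α (closedBall x ε) ≠ 0 := hpos.ne'
  have hdb := hα x hx (ε + δ) ε (by linarith) hε
  have hnt : α (closedBall x ε) ≠ ⊤ := (measure_lt_top α _).ne
  have heq : (ε + δ) / ε = 1 + δ / ε := by field_simp
  rw [heq] at hdb
  exact (ENNReal.div_le_iff_le_mul (Or.inl hne) (Or.inl hnt)).mp hdb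

lemma Phi_ge {Λ D ε δ : ℝ} (hD0 : 0 < D) (hΛ : 0 < Λ) (hε : 0 < ε) (hδ : 0 ≤ δ) :
    δ ≤ PhiLDE Λ D ε δ := by
  have hψpos : 0 < psiLD Λ D ε := lt_min one_pos (Real.rpow_pos_of_pos (div_pos hε hD0) Λ)
  have hψ1 : psiLD Λ D ε ≤ 1 := min_le_left _ _
  have h1 : δ ≤ δ / psiLD Λ D ε := by
    rw [le_div_iff₀ hψpos]; nlinarith
  have h2 : (1:ℝ) ≤ (1 + δ / ε) ^ Λ :=
    Real.one_le_rpow (le_add_of_nonneg_right (div_nonneg hδ hε.le)) hΛ.le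
  rw [PhiLDE]; linarith

lemma Phi_mono {Λ D ε a b : ℝ} (hD0 : 0 < D) (hΛ : 0 < Λ) (hε : 0 < ε)
    (ha : 0 ≤ a) (hab : a ≤ b) : PhiLDE Λ D ε a ≤ PhiLDE Λ D ε b := by
  have hψpos : 0 < psiLD Λ D ε := lt_min one_pos (Real.rpow_pos_of_pos (div_pos hε hD0) Λ)
  have h1 : a / psiLD Λ D ε ≤ b / psiLD Λ D ε := by gcongr
  have h2 : (1 + a / ε) ^ Λ ≤ (1 + b / ε) ^ Λ := by
    refine Real.rpow_le_rpow ?_ (by gcongr) hΛ.le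
    have := div_nonneg ha hε.le
    linarith
  rw [PhiLDE, PhiLDE]; linarith

lemma core {X : Type*} [MetricSpace X] [CompactSpace X] [MeasurableSpace X] [BorelSpace X]
    (D Λ ε : ℝ) (hD : Metric.diam (Set.univ : Set X) < D) (hΛ : 0 < Λ) (hε : 0 < ε)
    (α β : Measure X) [IsProbabilityMeasure α] [IsProbabilityMeasure β]
    (hαfull : msupport α = Set.univ) (hβfull : msupport β = Set.univ)
    (hα : DoublingCond α Λ) (hβ : DoublingCond β Λ) (x : X)
    (hle : β (closedBall x ε) ≤ α (closedBall x ε))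
    (δ : ℝ) (hδ : 0 < δ)
    (h : ∀ A : Set X, α A ≤ β (thickening δ A) + ENNReal.ofReal δ) :
    ∀ A : Set X, localTrunc α ε x A ≤
      localTrunc β ε x (thickening (PhiLDE Λ D ε δ) A) + ENNReal.ofReal (PhiLDE Λ D ε δ) := by
  intro A
  have hD0 : 0 < D := lt_of_le_of_lt diam_nonneg hD
  have hψpos : 0 < psiLD Λ D ε := lt_min one_pos (Real.rpow_pos_of_pos (div_pos hε hD0) Λ)
  have hδ'ge : δ ≤ PhiLDE Λ D ε δ := Phi_ge hD0 hΛ hε hδ.le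
  have hαx : x ∈ msupport α := hαfull ▸ mem_univ x
  have hβx : x ∈ msupport β := hβfull ▸ mem_univ x
  have hαpos : α (closedBall x ε) ≠ 0 := (hαx _ (closedBall_mem_nhds x hε)).ne'
  have hαtop : α (closedBall x ε) ≠ ⊤ := (measure_lt_top α _).ne
  have hβtop : β (closedBall x ε) ≠ ⊤ := (measure_lt_top β _).ne
  have hupper : β (closedBall x (ε + δ)) ≤
      ENNReal.ofReal ((1 + δ / ε) ^ Λ) * β (closedBall x ε) :=
    ball_upper Λ ε δ hε hδ.le β hβfull hβ x
  have hlower : ENNReal.ofReal (psiLD Λ D ε) ≤ α (closedBall x ε) :=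
    ball_lower D Λ ε hD hΛ hε α hαfull hα x
  have hsub : thickening δ (A ∩ closedBall x ε) ⊆
      thickening δ A ∩ closedBall x (ε + δ) := by
    intro z hz
    obtain ⟨w, ⟨hwA, hwB⟩, hd⟩ := mem_thickening_iff.mp hz
    refine ⟨mem_thickening_iff.mpr ⟨w, hwA, hd⟩, ?_⟩
    have hwx := mem_closedBall.mp hwB
    exact mem_closedBall.mpr (le_trans (dist_triangle z w x) (by linarith))
  have hsplit : β (thickening δ A ∩ closedBall x (ε + δ)) ≤
      β (thickening δ A ∩ closedBall x ε) +
        (ENNReal.ofReal ((1 + δ / ε) ^ Λ) - 1) * β (closedBall x ε) := by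
    have h1 : thickening δ A ∩ closedBall x (ε + δ) ⊆
        (thickening δ A ∩ closedBall x ε) ∪ (closedBall x (ε + δ) \ closedBall x ε) := by
      rintro z ⟨hzT, hzB'⟩
      by_cases hzB : z ∈ closedBall x ε
      · exact Or.inl ⟨hzT, hzB⟩
      · exact Or.inr ⟨hzB', hzB⟩
    refine (measure_mono h1).trans ((measure_union_le _ _).trans ?_)
    refine add_le_add_right ?_ _
    have hBB' : closedBall x ε ⊆ closedBall x (ε + δ) :=
      closedBall_subset_closedBall (by linarith)
    rw [measure_diff hBB' measurableSet_closedBall.nullMeasurableSet hβtop]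
    calc β (closedBall x (ε + δ)) - β (closedBall x ε)
        ≤ ENNReal.ofReal ((1 + δ / ε) ^ Λ) * β (closedBall x ε) - β (closedBall x ε) :=
          tsub_le_tsub_right hupper _
      _ = (ENNReal.ofReal ((1 + δ / ε) ^ Λ) - 1) * β (closedBall x ε) := by
          rw [ENNReal.sub_mul (fun _ _ => hβtop), one_mul]
  have hchain : α (A ∩ closedBall x ε) ≤
      β (thickening δ A ∩ closedBall x ε) +
        (ENNReal.ofReal ((1 + δ / ε) ^ Λ) - 1) * β (closedBall x ε) + ENNReal.ofReal δ := by
    calc α (A ∩ closedBall x ε)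
        ≤ β (thickening δ (A ∩ closedBall x ε)) + ENNReal.ofReal δ := h _
      _ ≤ β (thickening δ A ∩ closedBall x (ε + δ)) + ENNReal.ofReal δ :=
          add_le_add_left (measure_mono hsub) _
      _ ≤ _ := add_le_add_left hsplit _
  rw [localTrunc_apply, localTrunc_apply]
  refine le_trans (mul_le_mul_right hchain _) ?_
  rw [mul_add, mul_add]
  have t1 : (α (closedBall x ε))⁻¹ * β (thickening δ A ∩ closedBall x ε) ≤
      (β (closedBall x ε))⁻¹ * β (thickening (PhiLDE Λ D ε δ) A ∩ closedBall x ε) :=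
    mul_le_mul' (ENNReal.inv_le_inv.mpr hle)
      (measure_mono (inter_subset_inter_left _ (thickening_mono hδ'ge _)))
  have t2 : (α (closedBall x ε))⁻¹ *
      ((ENNReal.ofReal ((1 + δ / ε) ^ Λ) - 1) * β (closedBall x ε)) ≤
      ENNReal.ofReal ((1 + δ / ε) ^ Λ) - 1 := by
    rw [mul_comm, mul_assoc]
    calc (ENNReal.ofReal ((1 + δ / ε) ^ Λ) - 1) * (β (closedBall x ε) * (α (closedBall x ε))⁻¹)
        ≤ (ENNReal.ofReal ((1 + δ / ε) ^ Λ) - 1) * (α (closedBall x ε) * (α (closedBall x ε))⁻¹) :=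
          mul_le_mul_right (mul_le_mul_left hle _) _
      _ = ENNReal.ofReal ((1 + δ / ε) ^ Λ) - 1 := by
          rw [ENNReal.mul_inv_cancel hαpos hαtop, mul_one]
  have t3 : (α (closedBall x ε))⁻¹ * ENNReal.ofReal δ ≤
      ENNReal.ofReal (δ / psiLD Λ D ε) := by
    calc (α (closedBall x ε))⁻¹ * ENNReal.ofReal δ
        ≤ (ENNReal.ofReal (psiLD Λ D ε))⁻¹ * ENNReal.ofReal δ :=
          mul_le_mul_left (ENNReal.inv_le_inv.mpr hlower) _
      _ = ENNReal.ofReal (psiLD Λ D ε)⁻¹ * ENNReal.ofReal δ := by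
          rw [ENNReal.ofReal_inv_of_pos hψpos]
      _ = ENNReal.ofReal ((psiLD Λ D ε)⁻¹ * δ) :=
          (ENNReal.ofReal_mul (inv_nonneg.mpr hψpos.le)).symm
      _ = ENNReal.ofReal (δ / psiLD Λ D ε) := by rw [inv_mul_eq_div]
  have hpow1 : (1:ℝ) ≤ (1 + δ / ε) ^ Λ :=
    Real.one_le_rpow (le_add_of_nonneg_right (div_nonneg hδ.le hε.le)) hΛ.le
  have hfin : (ENNReal.ofReal ((1 + δ / ε) ^ Λ) - 1) + ENNReal.ofReal (δ / psiLD Λ D ε) =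
      ENNReal.ofReal (PhiLDE Λ D ε δ) := by
    rw [PhiLDE, ENNReal.ofReal_add (div_nonneg hδ.le hψpos.le) (by linarith),
      ENNReal.ofReal_sub _ zero_le_one, ENNReal.ofReal_one, add_comm]
  calc (α (closedBall x ε))⁻¹ * β (thickening δ A ∩ closedBall x ε) +
        (α (closedBall x ε))⁻¹ * ((ENNReal.ofReal ((1 + δ / ε) ^ Λ) - 1) * β (closedBall x ε)) +
        (α (closedBall x ε))⁻¹ * ENNReal.ofReal δ
      ≤ (β (closedBall x ε))⁻¹ * β (thickening (PhiLDE Λ D ε δ) A ∩ closedBall x ε) +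
        (ENNReal.ofReal ((1 + δ / ε) ^ Λ) - 1) + ENNReal.ofReal (δ / psiLD Λ D ε) :=
        add_le_add (add_le_add t1 t2) t3
    _ = (β (closedBall x ε))⁻¹ * β (thickening (PhiLDE Λ D ε δ) A ∩ closedBall x ε) +
        ENNReal.ofReal (PhiLDE Λ D ε δ) := by rw [add_assoc, hfin]

/-- **Claim 1 of the paper**: Prokhorov stability of local truncations.
For a compact metric space with diam < D and fully supported Λ-doubling Borel
probability measures α, β:
`d_P(m_α^{(ε)}(x), m_β^{(ε)}(x)) ≤ Φ_{Λ,D,ε}(d_P(α,β))` for every x. -/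
theorem prokhorov_stability_of_local_truncations
    {X : Type*} [MetricSpace X] [CompactSpace X] [MeasurableSpace X] [BorelSpace X]
    (D Λ ε : ℝ) (hD : Metric.diam (Set.univ : Set X) < D) (hΛ : 0 < Λ) (hε : 0 < ε)
    (α β : Measure X) [IsProbabilityMeasure α] [IsProbabilityMeasure β]
    (hαfull : msupport α = Set.univ) (hβfull : msupport β = Set.univ)
    (hα : DoublingCond α Λ) (hβ : DoublingCond β Λ) :
    ∀ x : X, prokhorovDist (localTrunc α ε x) (localTrunc β ε x) ≤
      PhiLDE Λ D ε (prokhorovDist α β) := by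
  intro x
  have hD0 : 0 < D := lt_of_le_of_lt diam_nonneg hD
  have hX : Nonempty X := by
    by_contra hX
    rw [not_nonempty_iff] at hX
    have h1 : α Set.univ = 1 := measure_univ
    rw [Set.univ_eq_empty_iff.mpr hX, measure_empty] at h1
    exact zero_ne_one h1
  have hαx : x ∈ msupport α := hαfull ▸ mem_univ x
  have hβx : x ∈ msupport β := hβfull ▸ mem_univ x
  have hαpos : α (closedBall x ε) ≠ 0 := (hαx _ (closedBall_mem_nhds x hε)).ne'
  have hαtop : α (closedBall x ε) ≠ ⊤ := (measure_lt_top α _).ne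
  have hβpos : β (closedBall x ε) ≠ 0 := (hβx _ (closedBall_mem_nhds x hε)).ne'
  have hβtop : β (closedBall x ε) ≠ ⊤ := (measure_lt_top β _).ne
  have hm1 : localTrunc α ε x Set.univ = 1 := by
    rw [localTrunc_apply, univ_inter, ENNReal.inv_mul_cancel hαpos hαtop]
  have hm'1 : localTrunc β ε x Set.univ = 1 := by
    rw [localTrunc_apply, univ_inter, ENNReal.inv_mul_cancel hβpos hβtop]
  set S := {δ : ℝ | 0 < δ ∧ ∀ A : Set X, α A ≤ β (thickening δ A) + ENNReal.ofReal δ} with hS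
  have hPd : prokhorovDist α β = sInf S := rfl
  have hDS : D ∈ S := by
    refine ⟨hD0, fun A => ?_⟩
    rcases eq_empty_or_nonempty A with rfl | ⟨a, ha⟩
    · simp
    · have hthick : thickening D A = Set.univ := by
        apply eq_univ_of_forall; intro z
        exact mem_thickening_iff.mpr ⟨a, ha, lt_of_le_of_lt
          (dist_le_diam_of_mem isCompact_univ.isBounded (mem_univ z) (mem_univ a)) hD⟩
      calc α A ≤ 1 := prob_le_one
        _ ≤ β (thickening D A) + ENNReal.ofReal D := by
            rw [hthick, measure_univ]; exact le_self_add
  have hη0 : 0 ≤ prokhorovDist α β := by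
    rw [hPd]
    exact le_csInf ⟨D, hDS⟩ (fun δ hδ => hδ.1.le)
  have key : ∀ δ ∈ S, prokhorovDist (localTrunc α ε x) (localTrunc β ε x) ≤ PhiLDE Λ D ε δ := by
    rintro δ ⟨hδ0, hδcond⟩
    have hδ' : 0 < PhiLDE Λ D ε δ := lt_of_lt_of_le hδ0 (Phi_ge hD0 hΛ hε hδ0.le)
    have hcond : ∀ A : Set X, localTrunc α ε x A ≤
        localTrunc β ε x (thickening (PhiLDE Λ D ε δ) A) + ENNReal.ofReal (PhiLDE Λ D ε δ) := by
      rcases le_total (β (closedBall x ε)) (α (closedBall x ε)) with hle | hle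
      · exact core D Λ ε hD hΛ hε α β hαfull hβfull hα hβ x hle δ hδ0 hδcond
      · have hrev := prok_sym α β measure_univ measure_univ δ hδcond
        have hrv2 := core D Λ ε hD hΛ hε β α hβfull hαfull hβ hα x hle δ hδ0 hrev
        exact prok_sym _ _ hm'1 hm1 _ hrv2
    exact csInf_le ⟨0, fun t ht => ht.1.le⟩ ⟨hδ', hcond⟩
  have habove : ∀ t : ℝ, 0 < t → prokhorovDist (localTrunc α ε x) (localTrunc β ε x) ≤
      PhiLDE Λ D ε (prokhorovDist α β + t) := by
    intro t ht
    have hlt : sInf S < prokhorovDist α β + t := by rw [hPd] at *; linarith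
    obtain ⟨δ, hδS, hδlt⟩ := exists_lt_of_csInf_lt ⟨D, hDS⟩ hlt
    exact (key δ hδS).trans (Phi_mono hD0 hΛ hε hδS.1.le hδlt.le)
  have hcont : ContinuousAt (fun t : ℝ => PhiLDE Λ D ε (prokhorovDist α β + t)) 0 := by
    have h1 : ContinuousAt (fun t : ℝ => 1 + (prokhorovDist α β + t) / ε) 0 := by fun_prop
    have hb0 : (1 : ℝ) + (prokhorovDist α β + 0) / ε ≠ 0 := by
      have := div_nonneg (by linarith : (0:ℝ) ≤ prokhorovDist α β + 0) hε.le
      linarith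
    have h2 : ContinuousAt (fun y : ℝ => y ^ Λ) (1 + (prokhorovDist α β + 0) / ε) :=
      Real.continuousAt_rpow_const _ _ (Or.inl hb0)
    have h3 : ContinuousAt (fun t : ℝ => (prokhorovDist α β + t) / psiLD Λ D ε) 0 := by fun_prop
    have h4' := ContinuousAt.comp (g := fun y : ℝ => y ^ Λ)
      (f := fun t : ℝ => 1 + (prokhorovDist α β + t) / ε) (x := (0:ℝ)) h2 h1
    have h4 : ContinuousAt (fun t : ℝ => (1 + (prokhorovDist α β + t) / ε) ^ Λ) 0 := h4'
    simp only [PhiLDE]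
    exact h3.add (h4.sub continuousAt_const)
  have htend : Tendsto (fun t : ℝ => PhiLDE Λ D ε (prokhorovDist α β + t))
      (nhdsWithin 0 (Ioi 0)) (nhds (PhiLDE Λ D ε (prokhorovDist α β))) := by
    have h5 := hcont.tendsto.mono_left
      (nhdsWithin_le_nhds : nhdsWithin (0:ℝ) (Ioi 0) ≤ nhds 0)
    simpa using h5
  refine ge_of_tendsto htend ?_
  filter_upwards [self_mem_nhdsWithin] with t ht
  exact habove t ht
end

section
/- Let α, β be fully supported Borel probability measures on a compact metric space (X,d), let ε > 0, let x ∈ X, and suppose β(B_ε(x)) ≤ α(B_ε(x)), diam(X) < D, and both α and β satisfy the Λ-doubling condition. If η > 0 satisfies d_P(α,β) < η, then for every Borel set A ⊂ X, m_α^{(ε)}(x)(A) ≤ m_β^{(ε)}(x)(A^η) + ξ, where ξ = η/min(1,(ε/D)^Λ) + ((1+η/ε)^Λ − 1) and A^η is the set of points at distance less than η from A. -/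
open MeasureTheory Metric Set Filter

private lemma prokhorov_bound {X : Type*} [MeasurableSpace X] [PseudoMetricSpace X]
    (α β : Measure X) [IsProbabilityMeasure α] {η : ℝ}
    (hP : prokhorovDist α β < η) (A : Set X) :
    α A ≤ β (thickening η A) + ENNReal.ofReal η := by
  have hne : {δ : ℝ | 0 < δ ∧ ∀ A : Set X,
      α A ≤ β (thickening δ A) + ENNReal.ofReal δ}.Nonempty := by
    refine ⟨1, one_pos, fun A => ?_⟩
    calc α A ≤ 1 := prob_le_one
      _ ≤ β (thickening 1 A) + ENNReal.ofReal 1 := by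
          rw [ENNReal.ofReal_one]; exact le_add_self
  obtain ⟨δ, ⟨hδ0, hδ⟩, hδη⟩ := exists_lt_of_csInf_lt hne hP
  calc α A ≤ β (thickening δ A) + ENNReal.ofReal δ := hδ A
    _ ≤ _ := add_le_add (measure_mono (thickening_mono hδη.le A))
        (ENNReal.ofReal_le_ofReal hδη.le)

/-- The key inequality in the proof of Claim 1 of the paper: if `d_P(α,β) < η` and
`β(B_ε(x)) ≤ α(B_ε(x))`, then for every Borel set A,
`m_α^{(ε)}(x)(A) ≤ m_β^{(ε)}(x)(A^η) + ξ` where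
`ξ = η/min(1,(ε/D)^Λ) + ((1+η/ε)^Λ − 1)`. -/
theorem local_truncation_prokhorov_inequality
    {X : Type*} [MetricSpace X] [CompactSpace X] [MeasurableSpace X] [BorelSpace X]
    (D Λ ε : ℝ) (hD : Metric.diam (Set.univ : Set X) < D) (hΛ : 0 < Λ) (hε : 0 < ε)
    (α β : Measure X) [IsProbabilityMeasure α] [IsProbabilityMeasure β]
    (hαfull : msupport α = Set.univ) (hβfull : msupport β = Set.univ)
    (hα : DoublingCond α Λ) (hβ : DoublingCond β Λ)
    (x : X) (hballs : β (closedBall x ε) ≤ α (closedBall x ε))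
    (η : ℝ) (hη : 0 < η) (hP : prokhorovDist α β < η)
    (A : Set X) (hA : MeasurableSet A) :
    localTrunc α ε x A ≤ localTrunc β ε x (thickening η A) +
      ENNReal.ofReal (η / min 1 ((ε / D) ^ Λ) + ((1 + η / ε) ^ Λ - 1)) := by
  have hDpos : 0 < D := lt_of_le_of_lt Metric.diam_nonneg hD
  set B : Set X := closedBall x ε with hBdef
  set B' : Set X := closedBall x (ε + η) with hB'def
  have hxα : x ∈ msupport α := by rw [hαfull]; trivial
  have hxβ : x ∈ msupport β := by rw [hβfull]; trivial
  have ha0 : α B ≠ 0 := (hxα _ (closedBall_mem_nhds x hε)).ne'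
  have hb0 : β B ≠ 0 := (hxβ _ (closedBall_mem_nhds x hε)).ne'
  have haT : α B ≠ ⊤ := measure_ne_top α B
  have hbT : β B ≠ ⊤ := measure_ne_top β B
  have hψpos : 0 < min 1 ((ε / D) ^ Λ) :=
    lt_min one_pos (Real.rpow_pos_of_pos (div_pos hε hDpos) Λ)
  have hc1 : (1 : ℝ) ≤ (1 + η / ε) ^ Λ :=
    Real.one_le_rpow (by have := div_pos hη hε; linarith) hΛ.le
  -- lower bound on `α B`
  have hainv : (α B)⁻¹ ≤ ENNReal.ofReal (1 / min 1 ((ε / D) ^ Λ)) := by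
    rcases le_or_gt ε D with h | h
    · have hub : (Set.univ : Set X) ⊆ closedBall x D := fun y _ =>
        mem_closedBall.mpr
          ((dist_le_diam_of_mem isCompact_univ.isBounded trivial trivial).trans hD.le)
      have haD : α (closedBall x D) = 1 := le_antisymm prob_le_one
        (by rw [← measure_univ (μ := α)]; exact measure_mono hub)
      have h1 := hα x hxα D ε h hε
      rw [haD] at h1
      have h2 : (1 : ENNReal) ≤ α B * ENNReal.ofReal ((D / ε) ^ Λ) := by
        rw [mul_comm]; exact (ENNReal.div_le_iff ha0 haT).mp h1
      have h3 : (α B)⁻¹ ≤ ENNReal.ofReal ((D / ε) ^ Λ) :=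
        (ENNReal.inv_le_iff_le_mul (fun _ => ha0) (fun h' => absurd h' haT)).mpr h2
      refine h3.trans (ENNReal.ofReal_le_ofReal ?_)
      rw [one_div, show (D / ε) ^ Λ = ((ε / D) ^ Λ)⁻¹ by
        rw [← Real.inv_rpow (div_nonneg hε.le hDpos.le), inv_div]]
      exact inv_anti₀ hψpos (min_le_right _ _)
    · have hub : (Set.univ : Set X) ⊆ B := fun y _ =>
        mem_closedBall.mpr
          ((dist_le_diam_of_mem isCompact_univ.isBounded trivial trivial).trans
            (hD.le.trans h.le))
      have haB : α B = 1 := le_antisymm prob_le_one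
        (by rw [← measure_univ (μ := α)]; exact measure_mono hub)
      rw [haB, inv_one, ← ENNReal.ofReal_one]
      exact ENNReal.ofReal_le_ofReal
        (by rw [le_div_iff₀ hψpos, one_mul]; exact min_le_left _ _)
  -- thickening inclusion
  have hthick : thickening η (A ∩ B) ⊆ thickening η A ∩ B' := by
    intro y hy
    rw [mem_thickening_iff] at hy
    obtain ⟨z, hz, hdz⟩ := hy
    refine ⟨mem_thickening_iff.mpr ⟨z, hz.1, hdz⟩, mem_closedBall.mpr ?_⟩
    calc dist y x ≤ dist y z + dist z x := dist_triangle _ _ _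
      _ ≤ η + ε := add_le_add hdz.le (mem_closedBall.mp hz.2)
      _ = ε + η := add_comm _ _
  have hsplit : β (thickening η A ∩ B') ≤ β (thickening η A ∩ B) + β (B' \ B) := by
    refine (measure_mono ?_).trans (measure_union_le _ _)
    rintro y ⟨hy1, hy2⟩
    by_cases hyB : y ∈ B
    · exact Or.inl ⟨hy1, hyB⟩
    · exact Or.inr ⟨hy2, hyB⟩
  have key : α (A ∩ B) ≤ β (thickening η A ∩ B) + β (B' \ B) + ENNReal.ofReal η :=
    calc α (A ∩ B) ≤ β (thickening η (A ∩ B)) + ENNReal.ofReal η := prokhorov_bound α β hP _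
      _ ≤ β (thickening η A ∩ B') + ENNReal.ofReal η :=
          add_le_add_left (measure_mono hthick) _
      _ ≤ _ := add_le_add_left hsplit _
  -- annulus bound
  have hBB' : B ⊆ B' := closedBall_subset_closedBall (by linarith)
  have hdiff : (β B)⁻¹ * β (B' \ B) ≤ ENNReal.ofReal ((1 + η / ε) ^ Λ - 1) := by
    have hd := hβ x hxβ (ε + η) ε (by linarith) hε
    have hd2 : β B' ≤ ENNReal.ofReal ((1 + η / ε) ^ Λ) * β B := by
      have heq : ((ε + η) / ε) = 1 + η / ε := by field_simp
      rw [← heq]; exact (ENNReal.div_le_iff hb0 hbT).mp hd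
    have hdiffeq : β (B' \ B) = β B' - β B :=
      measure_diff hBB' measurableSet_closedBall.nullMeasurableSet hbT
    rw [hdiffeq]
    have hmono : β B' - β B ≤ ENNReal.ofReal ((1 + η / ε) ^ Λ) * β B - β B :=
      tsub_le_tsub_right hd2 _
    refine le_trans (mul_le_mul_right hmono _) ?_
    rw [ENNReal.mul_sub (fun _ _ => ENNReal.inv_ne_top.mpr hb0), ← mul_assoc,
      mul_comm ((β B)⁻¹) (ENNReal.ofReal ((1 + η / ε) ^ Λ)), mul_assoc,
      ENNReal.inv_mul_cancel hb0 hbT, mul_one,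
      ← ENNReal.ofReal_one, ← ENNReal.ofReal_sub _ zero_le_one]
  -- assemble
  rw [localTrunc, localTrunc]
  simp only [Measure.smul_apply, smul_eq_mul, Measure.restrict_apply hA,
    Measure.restrict_apply isOpen_thickening.measurableSet]
  have hinvab : (α B)⁻¹ ≤ (β B)⁻¹ := ENNReal.inv_le_inv.mpr hballs
  calc (α B)⁻¹ * α (A ∩ B)
      ≤ (α B)⁻¹ * (β (thickening η A ∩ B) + β (B' \ B) + ENNReal.ofReal η) :=
        mul_le_mul_right key _
    _ = (α B)⁻¹ * β (thickening η A ∩ B) + (α B)⁻¹ * β (B' \ B)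
        + (α B)⁻¹ * ENNReal.ofReal η := by rw [mul_add, mul_add]
    _ ≤ (β B)⁻¹ * β (thickening η A ∩ B) + ENNReal.ofReal ((1 + η / ε) ^ Λ - 1)
        + ENNReal.ofReal (1 / min 1 ((ε / D) ^ Λ)) * ENNReal.ofReal η := by
        gcongr
        exact le_trans (mul_le_mul_left hinvab _) hdiff
    _ = (β B)⁻¹ * β (thickening η A ∩ B)
        + ENNReal.ofReal (η / min 1 ((ε / D) ^ Λ) + ((1 + η / ε) ^ Λ - 1)) := by
        rw [← ENNReal.ofReal_mul (by positivity),
          ENNReal.ofReal_add (by positivity) (by linarith),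
          show 1 / min 1 ((ε / D) ^ Λ) * η = η / min 1 ((ε / D) ^ Λ) by ring]
        ring
end

section
/- Let X ⊂ ℝ be compact, and let α be a probability measure on X with a twice continuously differentiable density f. Let x < x' be points with f(x) ≠ 0 and f(x') ≠ 0. Then as ε → 0, d_α^{(ε)}(x,x') = (x' − x) + (1/3)·[f'(x')/f(x') − f'(x)/f(x)]·ε² + O(ε³). -/
open MeasureTheory Metric Set Filter

open Asymptotics intervalIntegral

set_option maxHeartbeats 1000000

open scoped ENNReal NNReal

lemma coupling_value (a b a' b' : ℝ) (hba' : b < a')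
    (β₁ β₂ : Measure ℝ) (h1 : IsProbabilityMeasure β₁) (h2 : IsProbabilityMeasure β₂)
    (hs1 : β₁ (Icc a b)ᶜ = 0) (hs2 : β₂ (Icc a' b')ᶜ = 0) :
    wassersteinDist β₁ β₂ = (∫ t, t ∂β₂) - ∫ t, t ∂β₁ := by
  haveI := h1; haveI := h2
  have key : ∀ μ : Measure (ℝ × ℝ), μ.map Prod.fst = β₁ → μ.map Prod.snd = β₂ →
      ∫ p, dist p.1 p.2 ∂μ = (∫ t, t ∂β₂) - ∫ t, t ∂β₁ := by
    intro μ hμ1 hμ2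
    have hμuniv : μ univ = 1 := by
      have := congrArg (fun m : Measure ℝ => m univ) hμ1
      simpa [Measure.map_apply measurable_fst MeasurableSet.univ] using this
    haveI : IsProbabilityMeasure μ := ⟨hμuniv⟩
    have hbad1 : μ {p : ℝ × ℝ | p.1 ∉ Icc a b} = 0 := by
      have : μ (Prod.fst ⁻¹' (Icc a b)ᶜ) = β₁ (Icc a b)ᶜ := by
        rw [← hμ1, Measure.map_apply measurable_fst measurableSet_Icc.compl]
      simpa [hs1, Set.preimage] using this
    have hbad2 : μ {p : ℝ × ℝ | p.2 ∉ Icc a' b'} = 0 := by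
      have : μ (Prod.snd ⁻¹' (Icc a' b')ᶜ) = β₂ (Icc a' b')ᶜ := by
        rw [← hμ2, Measure.map_apply measurable_snd measurableSet_Icc.compl]
      simpa [hs2, Set.preimage] using this
    have hae : ∀ᵐ p ∂μ, p.1 ∈ Icc a b ∧ p.2 ∈ Icc a' b' := by
      have h1' : ∀ᵐ p ∂μ, p.1 ∈ Icc a b := by
        rw [MeasureTheory.ae_iff]; exact hbad1
      have h2' : ∀ᵐ p ∂μ, p.2 ∈ Icc a' b' := by
        rw [MeasureTheory.ae_iff]; exact hbad2
      filter_upwards [h1', h2'] with p hp1 hp2 using ⟨hp1, hp2⟩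
    have hint1 : Integrable (fun p : ℝ × ℝ => p.1) μ := by
      refine (integrable_const (|a| + |b|)).mono' measurable_fst.aestronglyMeasurable ?_
      filter_upwards [hae] with p hp
      rw [Real.norm_eq_abs, abs_le]
      constructor
      · nlinarith [hp.1.1, hp.1.2, abs_nonneg a, abs_nonneg b, neg_abs_le a, le_abs_self b]
      · nlinarith [hp.1.1, hp.1.2, abs_nonneg a, abs_nonneg b, neg_abs_le a, le_abs_self b]
    have hint2 : Integrable (fun p : ℝ × ℝ => p.2) μ := by
      refine (integrable_const (|a'| + |b'|)).mono' measurable_snd.aestronglyMeasurable ?_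
      filter_upwards [hae] with p hp
      rw [Real.norm_eq_abs, abs_le]
      constructor
      · nlinarith [hp.2.1, hp.2.2, abs_nonneg a', abs_nonneg b', neg_abs_le a', le_abs_self b']
      · nlinarith [hp.2.1, hp.2.2, abs_nonneg a', abs_nonneg b', neg_abs_le a', le_abs_self b']
    have hmean1 : ∫ p, p.1 ∂μ = ∫ t, t ∂β₁ := by
      rw [← hμ1]
      exact (integral_map measurable_fst.aemeasurable aestronglyMeasurable_id).symm
    have hmean2 : ∫ p, p.2 ∂μ = ∫ t, t ∂β₂ := by
      rw [← hμ2]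
      exact (integral_map measurable_snd.aemeasurable aestronglyMeasurable_id).symm
    calc ∫ p, dist p.1 p.2 ∂μ = ∫ p, ((p.2 : ℝ) - p.1) ∂μ := by
          refine integral_congr_ae ?_
          filter_upwards [hae] with p hp
          rw [Real.dist_eq, abs_of_nonpos (by linarith [hp.1.2, hp.2.1])]
          ring
      _ = (∫ p, p.2 ∂μ) - ∫ p, p.1 ∂μ := integral_sub hint2 hint1
      _ = (∫ t, t ∂β₂) - ∫ t, t ∂β₁ := by rw [hmean1, hmean2]
  have hset : ((fun μ : Measure (ℝ × ℝ) => ∫ p, dist p.1 p.2 ∂μ) ''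
      {μ : Measure (ℝ × ℝ) | μ.map Prod.fst = β₁ ∧ μ.map Prod.snd = β₂})
      = {(∫ t, t ∂β₂) - ∫ t, t ∂β₁} := by
    apply Set.Subset.antisymm
    · rintro v ⟨μ, ⟨hm1, hm2⟩, rfl⟩
      exact key μ hm1 hm2
    · rintro v rfl
      have hm1 : (β₁.prod β₂).map Prod.fst = β₁ := by simp
      have hm2 : (β₁.prod β₂).map Prod.snd = β₂ := by simp
      exact ⟨β₁.prod β₂, ⟨hm1, hm2⟩, key _ hm1 hm2⟩
  rw [wassersteinDist, hset, csInf_singleton]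


lemma trunc_facts (f : ℝ → ℝ) (hfc : Continuous f) (hf0 : ∀ s, 0 ≤ f s)
    (α : Measure ℝ) (hα : α = MeasureTheory.volume.withDensity fun s => ENNReal.ofReal (f s))
    (y ε : ℝ) (hε : 0 < ε) (hg : 0 < ∫ t in (y-ε)..(y+ε), f t) :
    IsProbabilityMeasure (localTrunc α ε y) ∧
    (localTrunc α ε y) (Icc (y-ε) (y+ε))ᶜ = 0 ∧
    ∫ t, t ∂(localTrunc α ε y) =
      (∫ t in (y-ε)..(y+ε), f t * t) / (∫ t in (y-ε)..(y+ε), f t) := by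
  have hle : y - ε ≤ y + ε := by linarith
  have hB : closedBall y ε = Icc (y-ε) (y+ε) := Real.closedBall_eq_Icc
  have hInt : IntegrableOn f (Icc (y-ε) (y+ε)) volume := hfc.integrableOn_Icc
  have hIcc : ∫ t in Icc (y-ε) (y+ε), f t ∂volume = ∫ t in (y-ε)..(y+ε), f t := by
    rw [integral_Icc_eq_integral_Ioc, ← integral_of_le hle]
  have hc : α (closedBall y ε) = ENNReal.ofReal (∫ t in (y-ε)..(y+ε), f t) := by
    rw [hB, hα, withDensity_apply _ measurableSet_Icc,
      ← ofReal_integral_eq_lintegral_ofReal hInt (Eventually.of_forall fun t => hf0 t), hIcc]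
  have hc0 : α (closedBall y ε) ≠ 0 := by
    rw [hc]; simpa using ENNReal.ofReal_pos.mpr hg |>.ne'
  have hctop : α (closedBall y ε) ≠ ⊤ := by rw [hc]; exact ENNReal.ofReal_ne_top
  have hrestrict : α.restrict (closedBall y ε) (closedBall y ε) = α (closedBall y ε) := by
    rw [Measure.restrict_apply (hB ▸ measurableSet_Icc)]
    simp
  constructor
  · constructor
    rw [localTrunc, Measure.smul_apply, smul_eq_mul, Measure.restrict_apply_univ,
      ENNReal.inv_mul_cancel hc0 hctop]
  constructor
  · rw [localTrunc, Measure.smul_apply, smul_eq_mul, ← hB,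
      Measure.restrict_apply (hB ▸ measurableSet_Icc.compl)]
    simp
  · rw [localTrunc, MeasureTheory.integral_smul_measure, hc, ENNReal.toReal_inv, ENNReal.toReal_ofReal hg.le]
    have hres : α.restrict (closedBall y ε)
        = (volume.restrict (Icc (y-ε) (y+ε))).withDensity fun s => ENNReal.ofReal (f s) := by
      rw [hα, hB, restrict_withDensity measurableSet_Icc]
    rw [hres]
    have hdens : (fun s => ENNReal.ofReal (f s)) = fun s => ((f s).toNNReal : ℝ≥0∞) := rfl
    rw [hdens, integral_withDensity_eq_integral_smul (hfc.measurable.real_toNNReal)]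
    have : ∫ t in Icc (y-ε) (y+ε), (f t).toNNReal • t ∂volume
        = ∫ t in Icc (y-ε) (y+ε), f t * t ∂volume := by
      refine integral_congr_ae (Eventually.of_forall fun t => ?_)
      simp [NNReal.smul_def, Real.coe_toNNReal _ (hf0 t)]
    rw [this, integral_Icc_eq_integral_Ioc, ← integral_of_le hle]
    rw [smul_eq_mul, inv_mul_eq_div]


lemma mean_est (f : ℝ → ℝ) (hf : ContDiff ℝ 2 f) (y : ℝ) (hfy : 0 < f y) :
    ∃ C ε₀ : ℝ, 0 < ε₀ ∧ ε₀ ≤ 1 ∧ ∀ ε : ℝ, 0 < ε → ε < ε₀ →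
      (ε * f y ≤ ∫ t in (y-ε)..(y+ε), f t) ∧
      |(∫ t in (y-ε)..(y+ε), (t - y) * f t) / (∫ t in (y-ε)..(y+ε), f t)
          - 1/3 * (deriv f y / f y) * ε^2| ≤ C * ε^3 := by
  -- differentiability facts
  have h2 : (2 : WithTop ℕ∞) = 1 + 1 := by norm_num
  have hf1 : ContDiff ℝ 1 (deriv f) := (contDiff_succ_iff_deriv.mp (h2 ▸ hf)).2.2
  have hdf : Differentiable ℝ f := hf.differentiable (by norm_num)
  have hdf1 : Differentiable ℝ (deriv f) := hf1.differentiable (by norm_num)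
  have hcf2 : Continuous (deriv (deriv f)) := hf1.continuous_deriv (le_refl 1)
  -- bound on second derivative near y
  obtain ⟨K, hK⟩ := (isCompact_Icc (a := y-1) (b := y+1)).exists_bound_of_continuousOn
    hcf2.continuousOn
  have hK0 : 0 ≤ K := le_trans (norm_nonneg _) (hK y (by constructor <;> linarith))
  -- choose ε₀
  refine ⟨(6*K*(f y) + 2*K*|deriv f y|) / (3 * (f y)^2),
    min 1 (Real.sqrt (f y / (2*K+1))), lt_min one_pos (Real.sqrt_pos.mpr (by positivity)),
    min_le_left _ _, ?_⟩
  intro ε hε hε0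
  have hε1 : ε ≤ 1 := le_of_lt (lt_of_lt_of_le hε0 (min_le_left _ _))
  have hεK : (2*K+1) * ε^2 < f y := by
    have h1 : ε < Real.sqrt (f y / (2*K+1)) := lt_of_lt_of_le hε0 (min_le_right _ _)
    have h2 : ε^2 < f y / (2*K+1) := by
      have := Real.sq_sqrt (le_of_lt (show (0:ℝ) < f y / (2*K+1) by positivity))
      nlinarith [Real.sqrt_nonneg (f y / (2*K+1))]
    rw [lt_div_iff₀ (by positivity)] at h2
    linarith
  have hle : y - ε ≤ y + ε := by linarith
  -- Taylor bound
  have hsub : Icc (y-ε) (y+ε) ⊆ Icc (y-1) (y+1) := by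
    apply Icc_subset_Icc <;> linarith
  have hderiv_bd : ∀ t ∈ Icc (y-ε) (y+ε), |deriv f t - deriv f y| ≤ K * ε := by
    intro t ht
    have := Convex.norm_image_sub_le_of_norm_deriv_le (f := deriv f)
      (s := Icc (y-1) (y+1)) (fun u _ => hdf1 u)
      hK (convex_Icc _ _) (by constructor <;> linarith) (hsub ht)
    rw [Real.norm_eq_abs, Real.norm_eq_abs] at this
    refine le_trans this ?_
    have : |t - y| ≤ ε := abs_le.mpr ⟨by linarith [ht.1], by linarith [ht.2]⟩
    nlinarith
  have htaylor : ∀ t ∈ Icc (y-ε) (y+ε), |f t - f y - deriv f y * (t - y)| ≤ K * ε * ε := by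
    intro t ht
    set φ : ℝ → ℝ := fun u => f u - deriv f y * u with hφ
    have hφd : ∀ u, HasDerivAt φ (deriv f u - deriv f y) u := fun u =>
      ((hdf u).hasDerivAt).sub (by simpa using (hasDerivAt_id u).const_mul (deriv f y))
    have := Convex.norm_image_sub_le_of_norm_deriv_le (f := φ)
      (s := Icc (y-ε) (y+ε)) (fun u _ => (hφd u).differentiableAt)
      (fun u hu => by rw [(hφd u).deriv]; exact (Real.norm_eq_abs _) ▸ hderiv_bd u hu)
      (convex_Icc _ _) (by constructor <;> linarith) ht
    rw [Real.norm_eq_abs, Real.norm_eq_abs] at this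
    have habs : |t - y| ≤ ε := abs_le.mpr ⟨by linarith [ht.1], by linarith [ht.2]⟩
    calc |f t - f y - deriv f y * (t - y)| = |φ t - φ y| := by rw [hφ]; ring_nf
      _ ≤ K * ε * |t - y| := this
      _ ≤ K * ε * ε := mul_le_mul_of_nonneg_left habs (by positivity)
  -- integral computations
  set g := ∫ t in (y-ε)..(y+ε), f t with hgdef
  set n := ∫ t in (y-ε)..(y+ε), (t - y) * f t with hndef
  have hfi : IntervalIntegrable f volume (y-ε) (y+ε) := hf.continuous.intervalIntegrable _ _
  have hlin_i : IntervalIntegrable (fun t => f y + deriv f y * (t - y)) volume (y-ε) (y+ε) :=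
    ((continuous_const.add (continuous_const.mul (continuous_id.sub continuous_const))) : Continuous fun t : ℝ => f y + deriv f y * (t - y)).intervalIntegrable _ _
  have hni : IntervalIntegrable (fun t => (t - y) * f t) volume (y-ε) (y+ε) :=
    (((continuous_id.sub continuous_const).mul hf.continuous) : Continuous fun t : ℝ => (t - y) * f t).intervalIntegrable _ _
  have hnlin_i : IntervalIntegrable (fun t => (t-y) * (f y + deriv f y * (t - y))) volume (y-ε) (y+ε) :=
    (((continuous_id.sub continuous_const).mul (continuous_const.add (continuous_const.mul (continuous_id.sub continuous_const)))) : Continuous fun t : ℝ => (t-y) * (f y + deriv f y * (t - y))).intervalIntegrable _ _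
  have hIoc_sub : Set.uIoc (y-ε) (y+ε) ⊆ Icc (y-ε) (y+ε) := by
    rw [uIoc_of_le hle]; exact Ioc_subset_Icc_self
  have h0 : ∫ t in (y-ε)..(y+ε), (t - y) = 0 := by
    rw [integral_comp_sub_right (fun u => u) y, integral_id]; ring
  have h02 : ∫ t in (y-ε)..(y+ε), (t - y)^2 = 2/3*ε^3 := by
    rw [integral_comp_sub_right (fun u => u^2) y, integral_pow]; push_cast; ring
  have glin : ∫ t in (y-ε)..(y+ε), (f y + deriv f y * (t - y)) = 2*ε*f y := by
    rw [integral_add (f := fun _ => f y) (g := fun t => deriv f y * (t - y)) intervalIntegrable_const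
      (((continuous_const.mul (continuous_id.sub continuous_const)) : Continuous fun t : ℝ => deriv f y * (t - y)).intervalIntegrable _ _),
      intervalIntegral.integral_const, intervalIntegral.integral_const_mul, h0]
    rw [smul_eq_mul]; ring
  have hnlin : ∫ t in (y-ε)..(y+ε), (t-y) * (f y + deriv f y * (t - y)) = 2/3*ε^3*deriv f y := by
    have hrw : (fun t => (t-y) * (f y + deriv f y * (t - y)))
        = fun t => f y * (t-y) + deriv f y * (t-y)^2 := by funext t; ring
    rw [hrw, integral_add (f := fun t => f y * (t - y)) (g := fun t => deriv f y * (t - y)^2)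
      (((continuous_const.mul (continuous_id.sub continuous_const)) : Continuous fun t : ℝ => f y * (t - y)).intervalIntegrable _ _)
      (((continuous_const.mul ((continuous_id.sub continuous_const).pow 2)) : Continuous fun t : ℝ => deriv f y * (t - y)^2).intervalIntegrable _ _),
      intervalIntegral.integral_const_mul, intervalIntegral.integral_const_mul, h0, h02]
    ring
  have habs2ε : |(y+ε) - (y-ε)| = 2*ε := by
    rw [show (y+ε) - (y-ε) = 2*ε by ring, abs_of_pos (by positivity)]
  have gdiff : |g - 2*ε*f y| ≤ 2*K*ε^3 := by
    have hgd : g - 2*ε*f y = ∫ t in (y-ε)..(y+ε), (f t - (f y + deriv f y * (t - y))) := by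
      rw [integral_sub hfi hlin_i, glin]
    rw [hgd, ← Real.norm_eq_abs]
    refine le_trans (intervalIntegral.norm_integral_le_of_norm_le_const (C := K*ε*ε) ?_) ?_
    · intro t ht
      rw [Real.norm_eq_abs, show f t - (f y + deriv f y * (t - y))
        = f t - f y - deriv f y * (t - y) by ring]
      exact htaylor t (hIoc_sub ht)
    · rw [habs2ε]; ring_nf; nlinarith [pow_pos hε 3]
  have ndiff : |n - 2/3*ε^3*deriv f y| ≤ 2*K*ε^4 := by
    have hnd : n - 2/3*ε^3*deriv f y
        = ∫ t in (y-ε)..(y+ε), ((t-y) * (f t - f y - deriv f y * (t - y))) := by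
      rw [show (fun t => (t-y) * (f t - f y - deriv f y * (t - y)))
        = fun t => (t-y) * f t - (t-y) * (f y + deriv f y * (t - y)) by funext t; ring,
        integral_sub hni hnlin_i, hnlin]
    rw [hnd, ← Real.norm_eq_abs]
    refine le_trans (intervalIntegral.norm_integral_le_of_norm_le_const (C := ε*(K*ε*ε)) ?_) ?_
    · intro t ht
      rw [Real.norm_eq_abs, abs_mul]
      have h1 : |t - y| ≤ ε := by
        have := hIoc_sub ht
        exact abs_le.mpr ⟨by linarith [this.1], by linarith [this.2]⟩
      exact mul_le_mul h1 (htaylor t (hIoc_sub ht)) (abs_nonneg _) hε.le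
    · rw [habs2ε]; ring_nf; nlinarith [pow_pos hε 4]
  have glower : ε * f y ≤ g := by
    have := abs_le.mp gdiff
    nlinarith [this.1, hεK, hε, sq_nonneg ε]
  have hg0 : 0 < g := lt_of_lt_of_le (by positivity) glower
  refine ⟨glower, ?_⟩
  have hkey : n/g - 1/3*(deriv f y/f y)*ε^2
      = (3*(f y)*(n - 2/3*ε^3*deriv f y) - ε^2*(deriv f y)*(g - 2*ε*f y)) / (3*(f y)*g) := by
    field_simp
    ring
  rw [hkey, abs_div, abs_of_pos (show (0:ℝ) < 3*(f y)*g by positivity)]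
  have hA' : |3*(f y)*(n - 2/3*ε^3*deriv f y)| ≤ 6*K*(f y)*ε^4 := by
    rw [abs_mul, abs_of_pos (show (0:ℝ) < 3*(f y) by positivity)]
    nlinarith [ndiff, abs_nonneg (n - 2/3*ε^3*deriv f y)]
  have hB' : |ε^2*(deriv f y)*(g - 2*ε*f y)| ≤ 2*K*|deriv f y| * ε^4 := by
    rw [abs_mul, abs_mul, abs_of_pos (show (0:ℝ) < ε^2 by positivity)]
    have h1 : ε^2 * |deriv f y| * |g - 2*ε*f y| ≤ ε^2 * |deriv f y| * (2*K*ε^3) :=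
      mul_le_mul_of_nonneg_left gdiff (by positivity)
    refine le_trans h1 ?_
    have h2 : ε^3 ≤ ε^2 := by nlinarith [pow_pos hε 2, pow_pos hε 3]
    nlinarith [abs_nonneg (deriv f y), pow_pos hε 2, mul_nonneg (mul_nonneg hK0 (abs_nonneg (deriv f y))) (pow_pos hε 2).le]
  have hnum : |3*(f y)*(n - 2/3*ε^3*deriv f y) - ε^2*(deriv f y)*(g - 2*ε*f y)|
      ≤ (6*K*(f y) + 2*K*|deriv f y|) * ε^4 := by
    refine le_trans (abs_sub _ _) ?_
    linarith [hA', hB']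
  calc |3*(f y)*(n - 2/3*ε^3*deriv f y) - ε^2*(deriv f y)*(g - 2*ε*f y)| / (3*(f y)*g)
      ≤ ((6*K*(f y) + 2*K*|deriv f y|) * ε^4) / (3*(f y)*(ε*(f y))) := by
        refine div_le_div₀ (by positivity) hnum (by positivity) ?_
        nlinarith [glower, hfy]
    _ = (6*K*(f y) + 2*K*|deriv f y|) / (3 * (f y)^2) * ε^3 := by
        field_simp



/-- **Remark 4 of the paper** (Taylor expansion of the Wasserstein transform on ℝ):
if `X ⊂ ℝ` is compact and α is a probability measure with C² density f supported in X,
then for `x < x'` with `f x ≠ 0` and `f x' ≠ 0`, as `ε → 0⁺`,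
`d_α^{(ε)}(x,x') = (x'−x) + (1/3)[f'(x')/f(x') − f'(x)/f(x)] ε² + O(ε³)`. -/
theorem wasserstein_transform_taylor_expansion
    (X : Set ℝ) (hX : IsCompact X)
    (f : ℝ → ℝ) (hf : ContDiff ℝ 2 f) (hf0 : ∀ s, 0 ≤ f s)
    (hsupp : Function.support f ⊆ X)
    (α : Measure ℝ) (hα : α = MeasureTheory.volume.withDensity fun s => ENNReal.ofReal (f s))
    [IsProbabilityMeasure α]
    (x x' : ℝ) (hxx : x < x') (hfx : f x ≠ 0) (hfx' : f x' ≠ 0) :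
    (fun ε : ℝ =>
        wassersteinDist (localTrunc α ε x) (localTrunc α ε x') -
          ((x' - x) + (1 / 3) * (deriv f x' / f x' - deriv f x / f x) * ε ^ 2))
      =O[nhdsWithin 0 (Set.Ioi 0)] fun ε : ℝ => ε ^ 3 := by
  have hfx0 : 0 < f x := (hf0 x).lt_of_ne (Ne.symm hfx)
  have hfx0' : 0 < f x' := (hf0 x').lt_of_ne (Ne.symm hfx')
  obtain ⟨C, ε₀, hε₀, hε₀1, hmain⟩ := mean_est f hf x hfx0
  obtain ⟨C', ε₀', hε₀', hε₀1', hmain'⟩ := mean_est f hf x' hfx0'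
  have hsplit : ∀ (y ε : ℝ), (∫ t in (y-ε)..(y+ε), f t * t)
      = (∫ t in (y-ε)..(y+ε), (t-y) * f t) + y * ∫ t in (y-ε)..(y+ε), f t := by
    intro y ε
    rw [show (fun t => f t * t) = fun t => (t-y) * f t + y * f t from funext fun t => by ring,
      intervalIntegral.integral_add (f := fun t => (t-y) * f t) (g := fun t => y * f t)
        (((continuous_id'.sub continuous_const).mul hf.continuous :
          Continuous fun t : ℝ => (t-y) * f t).intervalIntegrable _ _)
        ((continuous_const.mul hf.continuous : Continuous fun t : ℝ => y * f t).intervalIntegrable _ _),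
      intervalIntegral.integral_const_mul]
  set δ : ℝ := min (min ε₀ ε₀') ((x' - x)/2) with hδdef
  have hδ : 0 < δ := lt_min (lt_min hε₀ hε₀') (by linarith)
  rw [isBigO_iff]
  refine ⟨C + C', ?_⟩
  filter_upwards [Ioo_mem_nhdsGT_of_mem (⟨le_refl 0, hδ⟩ : (0:ℝ) ∈ Ico 0 δ)] with ε hε
  obtain ⟨hε1, hε2⟩ := hε
  have hεε₀ : ε < ε₀ := lt_of_lt_of_le hε2 (le_trans (min_le_left _ _) (min_le_left _ _))
  have hεε₀' : ε < ε₀' := lt_of_lt_of_le hε2 (le_trans (min_le_left _ _) (min_le_right _ _))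
  have hεxx : ε < (x' - x)/2 := lt_of_lt_of_le hε2 (min_le_right _ _)
  obtain ⟨hglow, hest⟩ := hmain ε hε1 hεε₀
  obtain ⟨hglow', hest'⟩ := hmain' ε hε1 hεε₀'
  have hgx : 0 < ∫ t in (x-ε)..(x+ε), f t := lt_of_lt_of_le (by positivity) hglow
  have hgx' : 0 < ∫ t in (x'-ε)..(x'+ε), f t := lt_of_lt_of_le (by positivity) hglow'
  obtain ⟨hp1, hz1, hm1⟩ := trunc_facts f hf.continuous hf0 α hα x ε hε1 hgx
  obtain ⟨hp1', hz1', hm1'⟩ := trunc_facts f hf.continuous hf0 α hα x' ε hε1 hgx'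
  have hW : wassersteinDist (localTrunc α ε x) (localTrunc α ε x')
      = (∫ t, t ∂(localTrunc α ε x')) - ∫ t, t ∂(localTrunc α ε x) :=
    coupling_value (x-ε) (x+ε) (x'-ε) (x'+ε) (by linarith) _ _ hp1 hp1' hz1 hz1'
  rw [hW, hm1, hm1', hsplit x ε, hsplit x' ε]
  have hmx : ((∫ t in (x-ε)..(x+ε), (t-x) * f t) + x * ∫ t in (x-ε)..(x+ε), f t)
      / (∫ t in (x-ε)..(x+ε), f t)
      = x + (∫ t in (x-ε)..(x+ε), (t-x) * f t) / (∫ t in (x-ε)..(x+ε), f t) := by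
    field_simp
    ring
  have hmx' : ((∫ t in (x'-ε)..(x'+ε), (t-x') * f t) + x' * ∫ t in (x'-ε)..(x'+ε), f t)
      / (∫ t in (x'-ε)..(x'+ε), f t)
      = x' + (∫ t in (x'-ε)..(x'+ε), (t-x') * f t) / (∫ t in (x'-ε)..(x'+ε), f t) := by
    field_simp
    ring
  rw [hmx, hmx']
  set N := (∫ t in (x-ε)..(x+ε), (t-x) * f t) / (∫ t in (x-ε)..(x+ε), f t) with hN
  set N' := (∫ t in (x'-ε)..(x'+ε), (t-x') * f t) / (∫ t in (x'-ε)..(x'+ε), f t) with hN'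
  have hrw : x' + N' - (x + N) - (x' - x + 1 / 3 * (deriv f x' / f x' - deriv f x / f x) * ε ^ 2)
      = (N' - 1/3 * (deriv f x' / f x') * ε^2) - (N - 1/3 * (deriv f x / f x) * ε^2) := by
    ring
  rw [Real.norm_eq_abs, Real.norm_eq_abs, hrw]
  have habs : |(N' - 1/3 * (deriv f x' / f x') * ε^2) - (N - 1/3 * (deriv f x / f x) * ε^2)|
      ≤ C' * ε^3 + C * ε^3 := le_trans (abs_sub _ _) (add_le_add hest' hest)
  have hε3 : |ε ^ 3| = ε ^ 3 := abs_of_pos (by positivity)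
  rw [hε3]
  linarith
end

section
/- Let α be a probability measure on ℝ with a twice continuously differentiable density f, and let x ∈ ℝ with f(x) ≠ 0. Define H(x) = (∫_{x−ε}^{x+ε} ∫_{x−ε}^{t} f(s) ds dt) / (∫_{x−ε}^{x+ε} f(s) ds). Then as ε → 0, H(x) = ε − (f'(x)/(3 f(x)))·ε² + O(ε³). -/
open MeasureTheory Set Filter Asymptotics intervalIntegral

private lemma abs_sub_le_of_uIoc {x s u : ℝ} (hu : u ∈ Set.uIoc x s) :
    |u - x| ≤ |s - x| := by
  rcases le_total x s with h | h
  · rw [Set.uIoc_of_le h] at hu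
    rw [abs_of_nonneg (by linarith [hu.1.le] : (0:ℝ) ≤ u - x),
      abs_of_nonneg (by linarith : (0:ℝ) ≤ s - x)]
    linarith [hu.2]
  · rw [Set.uIoc_of_ge h] at hu
    rw [abs_of_nonpos (by linarith [hu.2] : u - x ≤ 0),
      abs_of_nonpos (by linarith : s - x ≤ 0)]
    linarith [hu.1]

/-- The Taylor expansion of the quantity `H(x)` in the proof of Remark 4 of the paper:
for a C² probability density f on ℝ and a point x with `f x ≠ 0`,
`H(x) = (∫_{x−ε}^{x+ε} ∫_{x−ε}^{t} f(s) ds dt) / (∫_{x−ε}^{x+ε} f(s) ds)`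
satisfies `H(x) = ε − (f'(x)/(3 f(x))) ε² + O(ε³)` as `ε → 0⁺`. -/
theorem H_taylor_expansion
    (f : ℝ → ℝ) (hf : ContDiff ℝ 2 f) (hf0 : ∀ s, 0 ≤ f s)
    (hprob : ∫ s, f s = 1)
    (x : ℝ) (hfx : f x ≠ 0) :
    (fun ε : ℝ =>
        (∫ t in (x - ε)..(x + ε), ∫ s in (x - ε)..t, f s) /
          (∫ s in (x - ε)..(x + ε), f s) -
        (ε - (deriv f x / (3 * f x)) * ε ^ 2))
      =O[nhdsWithin 0 (Set.Ioi 0)] fun ε : ℝ => ε ^ 3 := by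
  have hfc : Continuous f := hf.continuous
  have hf2 : ContDiff ℝ (1 + 1) f := by exact_mod_cast hf
  have hd1 : Differentiable ℝ f := (contDiff_succ_iff_deriv.mp hf2).1
  have hf1 : ContDiff ℝ 1 (deriv f) := (contDiff_succ_iff_deriv.mp hf2).2.2
  have hd2 : Differentiable ℝ (deriv f) := (contDiff_one_iff_deriv.mp hf1).1
  have hc2 : Continuous (deriv (deriv f)) := (contDiff_one_iff_deriv.mp hf1).2
  have hc1 : Continuous (deriv f) := hd2.continuous
  set a := f x with ha_def
  set b := deriv f x with hb_def
  have ha : 0 < a := lt_of_le_of_ne (hf0 x) (Ne.symm hfx)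
  -- bound on |f''| near x
  obtain ⟨M0, hM0⟩ : ∃ M0, ∀ v ∈ Icc (x-1) (x+1), ‖deriv (deriv f) v‖ ≤ M0 :=
    isCompact_Icc.exists_bound_of_continuousOn hc2.continuousOn
  set M : ℝ := max M0 0 with hM_def
  have hMnn : 0 ≤ M := le_max_right _ _
  have hM : ∀ v ∈ Icc (x-1) (x+1), |deriv (deriv f) v| ≤ M := fun v hv =>
    le_trans (hM0 v hv) (le_max_left _ _)
  -- first order Taylor bound on deriv f
  have key0 : ∀ u, |u - x| ≤ 1 → |deriv f u - b| ≤ M * |u - x| := by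
    intro u hu
    have heq : deriv f u - b = ∫ v in x..u, deriv (deriv f) v := by
      rw [intervalIntegral.integral_deriv_eq_sub (fun v _ => hd2 v)
        (hc2.intervalIntegrable x u)]
    rw [heq, ← Real.norm_eq_abs]
    apply intervalIntegral.norm_integral_le_of_norm_le_const
    intro v hv
    have h1 : |v - x| ≤ |u - x| := abs_sub_le_of_uIoc hv
    have h2 : |v - x| ≤ 1 := le_trans h1 hu
    rw [abs_le] at h2
    rw [Real.norm_eq_abs]
    exact hM v ⟨by linarith [h2.1], by linarith [h2.2]⟩
  -- second order Taylor bound on f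
  have key1 : ∀ s, |s - x| ≤ 1 → |f s - (a + b * (s - x))| ≤ M * |s - x| ^ 2 := by
    intro s hs
    have heq : f s - (a + b * (s - x)) = ∫ u in x..s, (deriv f u - b) := by
      rw [intervalIntegral.integral_sub ((hc1.intervalIntegrable x s))
        (intervalIntegrable_const),
        intervalIntegral.integral_deriv_eq_sub (fun u _ => hd1 u)
        (hc1.intervalIntegrable x s), intervalIntegral.integral_const]
      simp only [smul_eq_mul]
      ring
    rw [heq, ← Real.norm_eq_abs]
    have hb1 : ∀ u ∈ Set.uIoc x s, ‖deriv f u - b‖ ≤ M * |s - x| := by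
      intro u hu
      have h1 : |u - x| ≤ |s - x| := abs_sub_le_of_uIoc hu
      have h2 : |u - x| ≤ 1 := le_trans h1 hs
      calc ‖deriv f u - b‖ = |deriv f u - b| := Real.norm_eq_abs _
        _ ≤ M * |u - x| := key0 u h2
        _ ≤ M * |s - x| := by nlinarith [abs_nonneg (u - x)]
    calc ‖∫ u in x..s, (deriv f u - b)‖ ≤ (M * |s - x|) * |s - x| :=
          intervalIntegral.norm_integral_le_of_norm_le_const hb1
      _ = M * |s - x| ^ 2 := by ring
  -- the primitive F
  set F : ℝ → ℝ := fun t => ∫ s in x..t, f s with hF_def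
  have hFc : Continuous F :=
    intervalIntegral.continuous_primitive (fun c d => hfc.intervalIntegrable c d) x
  -- third order Taylor bound on F
  set P : ℝ → ℝ := fun t => a * (t - x) + b / 2 * (t - x) ^ 2 with hP_def
  have hPc : Continuous P := by fun_prop
  have key2 : ∀ t, |t - x| ≤ 1 → |F t - P t| ≤ M * |t - x| ^ 3 := by
    intro t ht
    have hpoly : ∫ s in x..t, (a + b * (s - x)) = P t := by
      rw [intervalIntegral.integral_add intervalIntegrable_const
        (by apply Continuous.intervalIntegrable; fun_prop)]
      rw [intervalIntegral.integral_const]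
      have h2 : ∫ s in x..t, b * (s - x) = b * ((t - x) ^ 2 / 2) := by
        rw [intervalIntegral.integral_const_mul]
        rw [intervalIntegral.integral_comp_sub_right (fun u => u) x]
        rw [integral_id]
        simp
      rw [h2]
      simp only [hP_def, smul_eq_mul]
      ring
    have heq : F t - P t = ∫ s in x..t, (f s - (a + b * (s - x))) := by
      rw [intervalIntegral.integral_sub (hfc.intervalIntegrable x t)
        (by apply Continuous.intervalIntegrable; fun_prop), hpoly]
    rw [heq, ← Real.norm_eq_abs]
    have hb1 : ∀ s ∈ Set.uIoc x t, ‖f s - (a + b * (s - x))‖ ≤ M * |t - x| ^ 2 := by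
      intro s hs
      have h1 : |s - x| ≤ |t - x| := abs_sub_le_of_uIoc hs
      calc ‖f s - (a + b * (s - x))‖ = |f s - (a + b * (s - x))| := Real.norm_eq_abs _
        _ ≤ M * |s - x| ^ 2 := key1 s (le_trans h1 ht)
        _ ≤ M * |t - x| ^ 2 := mul_le_mul_of_nonneg_left (pow_le_pow_left₀ (abs_nonneg _) h1 2) hMnn
    calc ‖∫ s in x..t, (f s - (a + b * (s - x)))‖ ≤ (M * |t - x| ^ 2) * |t - x| :=
          intervalIntegral.norm_integral_le_of_norm_le_const hb1
      _ = M * |t - x| ^ 3 := by ring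
  -- lower bound for f near x
  obtain ⟨δ, hδ0, hδ⟩ : ∃ δ > 0, ∀ s, |s - x| < δ → a / 2 ≤ f s := by
    obtain ⟨δ, hδ0, hδ⟩ := Metric.continuousAt_iff.mp hfc.continuousAt (a / 2) (by positivity)
    refine ⟨δ, hδ0, fun s hs => ?_⟩
    have := hδ (show dist s x < δ by rwa [Real.dist_eq])
    rw [Real.dist_eq, abs_lt] at this
    linarith [this.1]
  set k : ℝ := b / (3 * a) with hk_def
  set C : ℝ := (4 * M + 2 * M * (1 + |k|)) / a with hC_def
  apply Asymptotics.IsBigO.of_bound C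
  have hm : (0:ℝ) < min (δ / 2) 1 := lt_min (by linarith) one_pos
  filter_upwards [Ioc_mem_nhdsGT hm] with ε hε
  obtain ⟨hε0, hεm⟩ := hε
  have hε1 : ε ≤ 1 := le_trans hεm (min_le_right _ _)
  have hεδ : ε < δ := lt_of_le_of_lt (le_trans hεm (min_le_left _ _)) (by linarith)
  set l := x - ε with hl_def
  set r := x + ε with hr_def
  set D : ℝ := ∫ s in l..r, f s with hD_def
  set N : ℝ := ∫ t in l..r, ∫ s in l..t, f s with hN_def
  have hlr : l ≤ r := by simp only [hl_def, hr_def]; linarith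
  have hmemIcc : ∀ s ∈ Icc l r, |s - x| ≤ ε := by
    intro s hs
    rw [abs_le]
    exact ⟨by linarith [hs.1], by linarith [hs.2]⟩
  have hmemIoc : ∀ s ∈ Set.uIoc l r, |s - x| ≤ ε := by
    intro s hs
    rw [Set.uIoc_of_le hlr] at hs
    exact hmemIcc s ⟨hs.1.le, hs.2⟩
  -- lower bound for D
  have hD_low : a * ε ≤ D := by
    have h1 : ∫ _ in l..r, (a / 2 : ℝ) = a * ε := by
      rw [intervalIntegral.integral_const]
      simp only [hl_def, hr_def, smul_eq_mul]
      ring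
    rw [← h1]
    apply intervalIntegral.integral_mono_on hlr intervalIntegrable_const
      (hfc.intervalIntegrable l r)
    intro s hs
    exact hδ s (lt_of_le_of_lt (hmemIcc s hs) hεδ)
  have hD0 : 0 < D := lt_of_lt_of_le (by positivity) hD_low
  -- error bound for D
  have hED : |D - 2 * a * ε| ≤ 2 * M * ε ^ 3 := by
    have hpoly : ∫ s in l..r, (a + b * (s - x)) = 2 * a * ε := by
      rw [intervalIntegral.integral_add intervalIntegrable_const
        (by apply Continuous.intervalIntegrable; fun_prop),
        intervalIntegral.integral_const, intervalIntegral.integral_const_mul,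
        intervalIntegral.integral_comp_sub_right (fun u => u) x, integral_id]
      simp only [hl_def, hr_def, smul_eq_mul]
      ring_nf
    have heq : D - 2 * a * ε = ∫ s in l..r, (f s - (a + b * (s - x))) := by
      rw [intervalIntegral.integral_sub (hfc.intervalIntegrable l r)
        (by apply Continuous.intervalIntegrable; fun_prop), hpoly]
    rw [heq, ← Real.norm_eq_abs]
    have hb1 : ∀ s ∈ Set.uIoc l r, ‖f s - (a + b * (s - x))‖ ≤ M * ε ^ 2 := by
      intro s hs
      have h1 : |s - x| ≤ ε := hmemIoc s hs
      calc ‖f s - (a + b * (s - x))‖ = |f s - (a + b * (s - x))| := Real.norm_eq_abs _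
        _ ≤ M * |s - x| ^ 2 := key1 s (le_trans h1 hε1)
        _ ≤ M * ε ^ 2 := mul_le_mul_of_nonneg_left (pow_le_pow_left₀ (abs_nonneg _) h1 2) hMnn
    calc ‖∫ s in l..r, (f s - (a + b * (s - x)))‖ ≤ (M * ε ^ 2) * |r - l| :=
          intervalIntegral.norm_integral_le_of_norm_le_const hb1
      _ = 2 * M * ε ^ 3 := by
          rw [show r - l = 2 * ε by simp only [hl_def, hr_def]; ring,
            abs_of_nonneg (by linarith : (0:ℝ) ≤ 2 * ε)]
          ring
  -- rewrite N via F
  have hinner : ∀ t, (∫ s in l..t, f s) = F t - F l := by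
    intro t
    rw [← intervalIntegral.integral_interval_sub_left (hfc.intervalIntegrable x t)
      (hfc.intervalIntegrable x l)]
  have hN_eq : N = ∫ t in l..r, (F t - F l) := by
    simp only [hN_def]
    exact intervalIntegral.integral_congr (fun t _ => hinner t)
  -- error bound for N
  have hEN : |N - (2 * a * ε ^ 2 - 2 / 3 * b * ε ^ 3)| ≤ 4 * M * ε ^ 4 := by
    have hPint : ∫ t in l..r, (P t - P l) = 2 * a * ε ^ 2 - 2 / 3 * b * ε ^ 3 := by
      have h1 : ∫ t in l..r, (t - x) = ((r - x) ^ 2 - (l - x) ^ 2) / 2 := by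
        rw [intervalIntegral.integral_comp_sub_right (fun u => u) x, integral_id]
      have h2 : ∫ t in l..r, (t - x) ^ 2 = ((r - x) ^ 3 - (l - x) ^ 3) / 3 := by
        rw [intervalIntegral.integral_comp_sub_right (fun u => u ^ 2) x,
          integral_pow]
        norm_num
      have h3 : ∫ t in l..r, P t = a * (((r - x) ^ 2 - (l - x) ^ 2) / 2)
          + b / 2 * (((r - x) ^ 3 - (l - x) ^ 3) / 3) := by
        simp only [hP_def]
        rw [intervalIntegral.integral_add (by apply Continuous.intervalIntegrable; fun_prop)
          (by apply Continuous.intervalIntegrable; fun_prop),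
          intervalIntegral.integral_const_mul, intervalIntegral.integral_const_mul, h1, h2]
      rw [intervalIntegral.integral_sub (hPc.intervalIntegrable l r) intervalIntegrable_const,
        h3, intervalIntegral.integral_const]
      simp only [hP_def, hl_def, hr_def, smul_eq_mul]
      ring
    have heq : N - (2 * a * ε ^ 2 - 2 / 3 * b * ε ^ 3)
        = ∫ t in l..r, ((F t - F l) - (P t - P l)) := by
      rw [intervalIntegral.integral_sub
        (by apply Continuous.intervalIntegrable; fun_prop)
        (by apply Continuous.intervalIntegrable; fun_prop), hPint, ← hN_eq]
    rw [heq, ← Real.norm_eq_abs]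
    have hFl : |F l - P l| ≤ M * ε ^ 3 := by
      have h1 : |l - x| = ε := by
        rw [hl_def, show x - ε - x = -ε by ring, abs_neg, abs_of_pos hε0]
      calc |F l - P l| ≤ M * |l - x| ^ 3 := key2 l (by rw [h1]; exact hε1)
        _ = M * ε ^ 3 := by rw [h1]
    have hb1 : ∀ t ∈ Set.uIoc l r, ‖(F t - F l) - (P t - P l)‖ ≤ 2 * M * ε ^ 3 := by
      intro t ht
      have h1 : |t - x| ≤ ε := hmemIoc t ht
      have hFt : |F t - P t| ≤ M * ε ^ 3 := by
        calc |F t - P t| ≤ M * |t - x| ^ 3 := key2 t (le_trans h1 hε1)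
          _ ≤ M * ε ^ 3 := mul_le_mul_of_nonneg_left (pow_le_pow_left₀ (abs_nonneg _) h1 3) hMnn
      calc ‖(F t - F l) - (P t - P l)‖ = |(F t - P t) - (F l - P l)| := by
            rw [Real.norm_eq_abs]; ring_nf
        _ ≤ |F t - P t| + |F l - P l| := abs_sub _ _
        _ ≤ 2 * M * ε ^ 3 := by linarith
    calc ‖∫ t in l..r, ((F t - F l) - (P t - P l))‖ ≤ (2 * M * ε ^ 3) * |r - l| :=
          intervalIntegral.norm_integral_le_of_norm_le_const hb1
      _ = 4 * M * ε ^ 4 := by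
          rw [show r - l = 2 * ε by simp only [hl_def, hr_def]; ring,
            abs_of_nonneg (by linarith : (0:ℝ) ≤ 2 * ε)]
          ring
  -- combine
  have hkey : N - (ε - k * ε ^ 2) * D
      = (N - (2 * a * ε ^ 2 - 2 / 3 * b * ε ^ 3)) - (ε - k * ε ^ 2) * (D - 2 * a * ε) := by
    have hak : 2 * a * k = 2 / 3 * b := by
      rw [hk_def]; field_simp
    linear_combination ε ^ 3 * hak
  have habs : |N - (ε - k * ε ^ 2) * D| ≤ (4 * M + 2 * M * (1 + |k|)) * ε ^ 4 := by
    rw [hkey]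
    have h1 : |ε - k * ε ^ 2| ≤ (1 + |k|) * ε := by
      calc |ε - k * ε ^ 2| ≤ |ε| + |k * ε ^ 2| := abs_sub _ _
        _ = ε + |k| * ε ^ 2 := by
            rw [abs_of_pos hε0, abs_mul, abs_of_nonneg (by positivity : (0:ℝ) ≤ ε ^ 2)]
        _ ≤ (1 + |k|) * ε := by
            have h2 : ε ^ 2 ≤ ε := by nlinarith
            have := mul_le_mul_of_nonneg_left h2 (abs_nonneg k)
            linarith
    calc |(N - (2 * a * ε ^ 2 - 2 / 3 * b * ε ^ 3)) - (ε - k * ε ^ 2) * (D - 2 * a * ε)|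
        ≤ |N - (2 * a * ε ^ 2 - 2 / 3 * b * ε ^ 3)| + |ε - k * ε ^ 2| * |D - 2 * a * ε| := by
          rw [← abs_mul]; exact abs_sub _ _
      _ ≤ 4 * M * ε ^ 4 + ((1 + |k|) * ε) * (2 * M * ε ^ 3) := by
          have := mul_le_mul h1 hED (abs_nonneg _) (by positivity)
          linarith
      _ = (4 * M + 2 * M * (1 + |k|)) * ε ^ 4 := by ring
  have hfrac : N / D - (ε - k * ε ^ 2) = (N - (ε - k * ε ^ 2) * D) / D := by
    rw [sub_div, mul_div_assoc, div_self hD0.ne', mul_one]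
  rw [Real.norm_eq_abs, Real.norm_eq_abs, hfrac, abs_div, abs_of_pos hD0]
  calc |N - (ε - k * ε ^ 2) * D| / D ≤ ((4 * M + 2 * M * (1 + |k|)) * ε ^ 4) / (a * ε) :=
        div_le_div₀ (by positivity) habs (by positivity) hD_low
    _ = C * |ε ^ 3| := by
        rw [hC_def, abs_of_nonneg (by positivity : (0:ℝ) ≤ ε ^ 3)]
        rw [div_mul_eq_mul_div, div_eq_div_iff (by positivity : a * ε ≠ 0) ha.ne']
        ring
end
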